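/- arXiv:1109.2561 — 6 statements merged into one kernel-verified Lean document; each statement's English description precedes it below -/
import Mathlib

section
/- Let (X,L) be a convex geometry with lattice of closed sets ℒ = (𝒞, ⊆). Then every copoint B of (X,L) is incomparable (under inclusion) with L({α(B)}) if and only if ℒ is 2-edge-connected, i.e., the Hasse diagram of ℒ viewed as an undirected graph has no cut edge. -/
structure ConvexGeom (α : Type*) [DecidableEq α] where
  X : Finset α
  sets : Finset (Finset α)
  subset_ground : ∀ A ∈ sets, A ⊆ X
  empty_mem : ∅ ∈ sets
  ground_mem : X ∈ sets
  inter_mem : ∀ A ∈ sets, ∀ B ∈ sets, A ∩ B ∈ sets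
  anti_exchange : ∀ C ∈ sets, ∀ p ∈ X, ∀ q ∈ X, p ∉ C → q ∉ C → p ≠ q →
    (∀ A ∈ sets, insert p C ⊆ A → q ∈ A) → ¬ (∀ A ∈ sets, insert q C ⊆ A → p ∈ A)

variable {α : Type*} [DecidableEq α]

def ConvexGeom.cl (G : ConvexGeom α) (S : Finset α) : Finset α :=
  G.X.filter (fun x => ∀ A ∈ G.sets, S ⊆ A → x ∈ A)

def ConvexGeom.IsCopoint (G : ConvexGeom α) (A : Finset α) : Prop :=
  A ∈ G.sets ∧ ∃! B, B ∈ G.sets ∧ (B \ A).card = 1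

def ConvexGeom.Attached (G : ConvexGeom α) (A : Finset α) (p : α) : Prop :=
  G.IsCopoint A ∧ ∃ B ∈ G.sets, B \ A = {p}

/-- A cycle of copoints `(A 0, …, A (l-1))` with attachment points `a i = α(A i)`:
the copoints are pairwise distinct and `α(A i) ∈ A (i+1)` cyclically. -/
def ConvexGeom.IsCycle (G : ConvexGeom α) {l : ℕ} (A : Fin l → Finset α) (a : Fin l → α) : Prop :=
  Function.Injective A ∧ (∀ i, G.Attached (A i) (a i)) ∧
  ∀ i : Fin l, a i ∈ A ⟨(i.1 + 1) % l, Nat.mod_lt _ i.pos⟩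

/-- A minimal cycle of copoints: no nonempty proper subfamily of its copoints can be
arranged into a cycle of copoints. -/
def ConvexGeom.IsMinCycle (G : ConvexGeom α) {l : ℕ} (A : Fin l → Finset α) (a : Fin l → α) :
    Prop :=
  G.IsCycle A a ∧ ∀ (m : ℕ) (B : Fin m → Finset α) (b : Fin m → α),
    0 < m → G.IsCycle B b → ¬ Set.range B ⊂ Set.range A

/-- The copoint graph `𝒢((X,L))`: vertices are the copoints, two distinct copoints `A`, `B`
are adjacent iff `α(A) ∈ B` and `α(B) ∈ A`. -/
def ConvexGeom.copointGraph (G : ConvexGeom α) : SimpleGraph {A : Finset α // G.IsCopoint A} where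
  Adj A B := A ≠ B ∧ (∃ p, G.Attached A.1 p ∧ p ∈ B.1) ∧ (∃ q, G.Attached B.1 q ∧ q ∈ A.1)
  symm := ⟨fun A B h => ⟨h.1.symm, h.2.2, h.2.1⟩⟩
  loopless := ⟨fun A h => h.1 rfl⟩

def ConvexGeom.CriticalPair (G : ConvexGeom α) (A B : Finset α) : Prop :=
  A ∈ G.sets ∧ B ∈ G.sets ∧ ¬ A ⊆ B ∧ ¬ B ⊆ A ∧
  (∀ U ∈ G.sets, B ⊂ U → A ⊂ U) ∧ (∀ D ∈ G.sets, D ⊂ A → D ⊂ B)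

/-- The graph `G^C_ℒ`: vertices are the critical pairs of the lattice of closed sets, and
two distinct critical pairs are adjacent iff they form a directed 2-cycle of the critical
digraph (where `(A,B) → (C,D)` iff `C ⊆ B`). -/
def ConvexGeom.critGraph (G : ConvexGeom α) :
    SimpleGraph {P : Finset α × Finset α // G.CriticalPair P.1 P.2} where
  Adj P Q := P ≠ Q ∧ Q.1.1 ⊆ P.1.2 ∧ P.1.1 ⊆ Q.1.2
  symm := ⟨fun P Q h => ⟨h.1.symm, h.2.2, h.2.1⟩⟩
  loopless := ⟨fun P h => h.1 rfl⟩

/-- The lattice of closed sets has a realizer of size `t`: `t` linear extensions of the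
inclusion order on closed sets whose intersection is the inclusion order. -/
def ConvexGeom.HasRealizer (G : ConvexGeom α) (t : ℕ) : Prop :=
  ∃ r : Fin t → ({A : Finset α // A ∈ G.sets} → {A : Finset α // A ∈ G.sets} → Prop),
    (∀ i, IsLinearOrder _ (r i)) ∧
    (∀ i A B, A.1 ⊆ B.1 → r i A B) ∧
    (∀ A B, (∀ i, r i A B) → A.1 ⊆ B.1)

/-- The order dimension of the lattice of closed sets: the least positive `t` admitting
a realizer of size `t`. -/
noncomputable def ConvexGeom.orderDim (G : ConvexGeom α) : ℕ :=
  sInf {t : ℕ | 0 < t ∧ G.HasRealizer t}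

/-- `S` is an independent set of the convex geometry: `p ∉ L(S \ {p})` for all `p ∈ S`. -/
def ConvexGeom.Indep (G : ConvexGeom α) (S : Finset α) : Prop :=
  S ⊆ G.X ∧ ∀ p ∈ S, p ∉ G.cl (S.erase p)


/-- The Hasse diagram of the lattice of closed sets, viewed as an undirected graph:
closed sets `A`, `B` are adjacent iff one covers the other in the inclusion order. -/
def ConvexGeom.hasse (G : ConvexGeom α) : SimpleGraph {A : Finset α // A ∈ G.sets} where
  Adj A B := (A.1 ⊂ B.1 ∧ ∀ C ∈ G.sets, ¬ (A.1 ⊂ C ∧ C ⊂ B.1)) ∨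
             (B.1 ⊂ A.1 ∧ ∀ C ∈ G.sets, ¬ (B.1 ⊂ C ∧ C ⊂ A.1))
  symm := ⟨fun A B h => h.symm⟩
  loopless := ⟨fun A h => by
    rcases h with ⟨h, -⟩ | ⟨h, -⟩ <;> exact lt_irrefl _ h⟩

theorem ConvexGeom.mem_cl (G : ConvexGeom α) {S : Finset α} {x : α} :
    x ∈ G.cl S ↔ x ∈ G.X ∧ ∀ A ∈ G.sets, S ⊆ A → x ∈ A := by
  simp [ConvexGeom.cl]

theorem ConvexGeom.interFilter_mem (G : ConvexGeom α) (F : Finset (Finset α))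
    (hF : ∀ A ∈ F, A ∈ G.sets) :
    (G.X.filter (fun x => ∀ A ∈ F, x ∈ A)) ∈ G.sets := by
  induction F using Finset.induction_on with
  | empty => simpa using G.ground_mem
  | @insert A F hA ih =>
    have he : G.X.filter (fun x => ∀ A' ∈ insert A F, x ∈ A')
        = A ∩ G.X.filter (fun x => ∀ A' ∈ F, x ∈ A') := by
      ext x
      simp only [Finset.mem_filter, Finset.mem_inter, Finset.mem_insert]
      constructor
      · rintro ⟨hx, h⟩
        exact ⟨h A (Or.inl rfl), hx, fun A' hA' => h A' (Or.inr hA')⟩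
      · rintro ⟨hxA, hx, h⟩
        exact ⟨hx, fun A' hA' => hA'.elim (fun e => e ▸ hxA) (h A')⟩
    rw [he]
    exact G.inter_mem _ (hF A (Finset.mem_insert_self _ _)) _
      (ih fun A' h => hF A' (Finset.mem_insert_of_mem h))

theorem ConvexGeom.clMem (G : ConvexGeom α) (S : Finset α) : G.cl S ∈ G.sets := by
  have h := G.interFilter_mem (G.sets.filter (fun A => S ⊆ A))
    (fun A hA => (Finset.mem_filter.1 hA).1)
  have he : G.cl S = G.X.filter (fun x => ∀ A ∈ G.sets.filter (fun A => S ⊆ A), x ∈ A) := by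
    ext x
    simp only [ConvexGeom.mem_cl, Finset.mem_filter, and_imp]
  rw [he]; exact h

theorem ConvexGeom.subset_cl (G : ConvexGeom α) {S : Finset α} (hS : S ⊆ G.X) :
    S ⊆ G.cl S := fun x hx => G.mem_cl.2 ⟨hS hx, fun _ _ h => h hx⟩

theorem ConvexGeom.cl_subset (G : ConvexGeom α) {S A : Finset α} (hA : A ∈ G.sets)
    (hSA : S ⊆ A) : G.cl S ⊆ A := fun _ hx => (G.mem_cl.1 hx).2 A hA hSA

theorem ConvexGeom.ext_point (G : ConvexGeom α) {A D : Finset α} (hA : A ∈ G.sets)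
    (hD : D ∈ G.sets) (hAD : A ⊆ D) (hne : A ≠ D) :
    ∃ x, x ∈ D ∧ x ∉ A ∧ insert x A ∈ G.sets := by
  have hAX : A ⊆ G.X := G.subset_ground A hA
  have hDX : D ⊆ G.X := G.subset_ground D hD
  have hnonempty : (D \ A).Nonempty := by
    rw [Finset.sdiff_nonempty]
    intro h
    exact hne (Finset.Subset.antisymm hAD h)
  obtain ⟨x, hx, hmin⟩ := Finset.exists_min_image (D \ A)
    (fun y => (G.cl (insert y A)).card) hnonempty
  obtain ⟨hxD, hxA⟩ := Finset.mem_sdiff.1 hx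
  refine ⟨x, hxD, hxA, ?_⟩
  have hKmem : G.cl (insert x A) ∈ G.sets := G.clMem _
  have hsubK : insert x A ⊆ G.cl (insert x A) :=
    G.subset_cl (Finset.insert_subset (hDX hxD) hAX)
  have hKD : G.cl (insert x A) ⊆ D := G.cl_subset hD (Finset.insert_subset hxD hAD)
  have hKeq : G.cl (insert x A) = insert x A := by
    by_contra hcon
    obtain ⟨y, hyK, hyI⟩ := Finset.exists_of_ssubset
      (Finset.lt_iff_ssubset.1 (lt_of_le_of_ne hsubK (fun h => hcon h.symm)))
    have hyA : y ∉ A := fun h => hyI (Finset.mem_insert_of_mem h)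
    have hyx : y ≠ x := fun h => hyI (h ▸ Finset.mem_insert_self _ _)
    have hyD : y ∈ D := hKD hyK
    have hyN : y ∈ D \ A := Finset.mem_sdiff.2 ⟨hyD, hyA⟩
    have hsub2 : G.cl (insert y A) ⊆ G.cl (insert x A) :=
      G.cl_subset hKmem (Finset.insert_subset hyK ((Finset.subset_insert _ _).trans hsubK))
    have hcardle := hmin y hyN
    have heq : G.cl (insert y A) = G.cl (insert x A) :=
      Finset.eq_of_subset_of_card_le hsub2 hcardle
    have hxK' : x ∈ G.cl (insert y A) := heq ▸ (hsubK (Finset.mem_insert_self _ _))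
    exact G.anti_exchange A hA x (hDX hxD) y ((G.mem_cl.1 hyK).1) hxA hyA
      (Ne.symm hyx) (fun A' hA' h => (G.mem_cl.1 hyK).2 A' hA' h)
      (fun A' hA' h => (G.mem_cl.1 hxK').2 A' hA' h)
  rw [← hKeq]; exact hKmem

theorem ConvexGeom.hasse_adj_insert (G : ConvexGeom α) {A : Finset α} {x : α}
    (hA : A ∈ G.sets) (hx : x ∉ A) (hxA : insert x A ∈ G.sets) :
    G.hasse.Adj ⟨A, hA⟩ ⟨insert x A, hxA⟩ := by
  left
  refine ⟨Finset.ssubset_insert hx, fun C hC ⟨h1, h2⟩ => ?_⟩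
  obtain ⟨y, hyC, hyA⟩ := Finset.exists_of_ssubset h1
  have hyx : y = x := by
    have := h2.1 hyC
    rcases Finset.mem_insert.1 this with h | h
    · exact h
    · exact absurd h hyA
  exact h2.2 (Finset.insert_subset (hyx ▸ hyC) h1.1)

theorem ConvexGeom.cover_eq_insert (G : ConvexGeom α) {A D : Finset α}
    (hA : A ∈ G.sets) (hD : D ∈ G.sets) (hlt : A ⊂ D)
    (hcov : ∀ C ∈ G.sets, ¬ (A ⊂ C ∧ C ⊂ D)) :
    ∃ q, q ∉ A ∧ D = insert q A := by
  obtain ⟨x, hxD, hxA, hins⟩ := G.ext_point hA hD hlt.1 (Finset.ssubset_iff_subset_ne.1 hlt).2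
  refine ⟨x, hxA, ?_⟩
  by_contra hne
  exact hcov (insert x A) hins ⟨Finset.ssubset_insert hxA,
    Finset.lt_iff_ssubset.1 (lt_of_le_of_ne (Finset.insert_subset hxD hlt.1)
      (fun h => hne h.symm))⟩

theorem ConvexGeom.reach_interval (G : ConvexGeom α)
    (vA vD : {A : Finset α // A ∈ G.sets}) :
    ∀ (n : ℕ) (S T : {A : Finset α // A ∈ G.sets}), (T.1 \ S.1).card = n → S.1 ⊆ T.1 →
    (¬ (S.1 ⊆ vA.1 ∧ vA.1 ⊆ T.1) ∨ ¬ (S.1 ⊆ vD.1 ∧ vD.1 ⊆ T.1)) →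
    (G.hasse \ SimpleGraph.fromEdgeSet {s(vA, vD)}).Reachable S T := by
  intro n
  induction n using Nat.strong_induction_on with
  | _ n ih =>
  intro S T hcard hST hcond
  rcases eq_or_ne S T with rfl | hne
  · exact SimpleGraph.Reachable.refl _
  have hne1 : S.1 ≠ T.1 := fun h => hne (Subtype.ext h)
  obtain ⟨x, hxT, hxS, hins⟩ := G.ext_point S.2 T.2 hST hne1
  set M : {A : Finset α // A ∈ G.sets} := ⟨insert x S.1, hins⟩ with hM
  have hadj : (G.hasse \ SimpleGraph.fromEdgeSet {s(vA, vD)}).Adj S M := by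
    rw [SimpleGraph.sdiff_adj]
    constructor
    · exact G.hasse_adj_insert S.2 hxS hins
    · rw [SimpleGraph.fromEdgeSet_adj]
      rintro ⟨hmem, hne2⟩
      have heq : s(S, M) = s(vA, vD) := Set.mem_singleton_iff.1 hmem
      rcases Sym2.eq_iff.1 heq with ⟨h1, h2⟩ | ⟨h1, h2⟩
      · rcases hcond with hc | hc
        · exact hc ⟨h1 ▸ Finset.Subset.refl _, h1 ▸ hST⟩
        · exact hc ⟨h2 ▸ Finset.subset_insert _ _, h2 ▸ Finset.insert_subset hxT hST⟩
      · rcases hcond with hc | hc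
        · exact hc ⟨h2 ▸ Finset.subset_insert _ _, h2 ▸ Finset.insert_subset hxT hST⟩
        · exact hc ⟨h1 ▸ Finset.Subset.refl _, h1 ▸ hST⟩
  have hMT : M.1 ⊆ T.1 := Finset.insert_subset hxT hST
  have hcard2 : (T.1 \ M.1).card < n := by
    rw [← hcard]
    apply Finset.card_lt_card
    constructor
    · exact Finset.sdiff_subset_sdiff (Finset.Subset.refl _) (Finset.subset_insert _ _)
    · intro h
      have hx1 : x ∈ T.1 \ S.1 := Finset.mem_sdiff.2 ⟨hxT, hxS⟩
      have hx2 := h hx1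
      simp [Finset.mem_sdiff, hM] at hx2
  have hcond2 : (¬ (M.1 ⊆ vA.1 ∧ vA.1 ⊆ T.1) ∨ ¬ (M.1 ⊆ vD.1 ∧ vD.1 ⊆ T.1)) := by
    rcases hcond with hc | hc
    · exact Or.inl (fun ⟨h1, h2⟩ => hc ⟨(Finset.subset_insert _ _).trans h1, h2⟩)
    · exact Or.inr (fun ⟨h1, h2⟩ => hc ⟨(Finset.subset_insert _ _).trans h1, h2⟩)
  exact (hadj.reachable).trans (ih _ hcard2 M T rfl hMT hcond2)

theorem ConvexGeom.not_bridge_core (G : ConvexGeom α)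
    (H : ∀ (B : Finset α) (p : α), G.Attached B p → ¬ B ⊆ G.cl {p} ∧ ¬ G.cl {p} ⊆ B)
    (u v : {A : Finset α // A ∈ G.sets}) (hlt : u.1 ⊂ v.1)
    (hcov : ∀ C ∈ G.sets, ¬ (u.1 ⊂ C ∧ C ⊂ v.1)) :
    (G.hasse \ SimpleGraph.fromEdgeSet {s(u, v)}).Reachable u v := by
  obtain ⟨q, hqu, hveq⟩ := G.cover_eq_insert u.2 v.2 hlt hcov
  have hvu : ¬ v.1 ⊆ u.1 := fun h => hlt.2 h
  have hqv : q ∈ v.1 := hveq ▸ Finset.mem_insert_self _ _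
  -- find a closed set E with q' ∈ E \ u and ¬ u ⊆ E   or   E = insert x u ≠ v
  by_cases hB : ∃ B ∈ G.sets, B ≠ v.1 ∧ (B \ u.1).card = 1
  · obtain ⟨B, hBmem, hBne, hBcard⟩ := hB
    obtain ⟨x, hxeq⟩ := Finset.card_eq_one.1 hBcard
    have hxB : x ∈ B := by
      have : x ∈ B \ u.1 := hxeq ▸ Finset.mem_singleton_self x
      exact (Finset.mem_sdiff.1 this).1
    have hxu : x ∉ u.1 := by
      have : x ∈ B \ u.1 := hxeq ▸ Finset.mem_singleton_self x
      exact (Finset.mem_sdiff.1 this).2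
    have hnBu : ¬ B ⊆ u.1 := fun h => hxu (h hxB)
    have hnotboth : ¬ (u.1 ⊆ B) ∨ ¬ (v.1 ⊆ B) := by
      by_contra hcc
      push_neg at hcc
      apply hBne
      apply Finset.Subset.antisymm
      · intro y hy
        by_cases hyu : y ∈ u.1
        · exact hveq ▸ Finset.mem_insert_of_mem hyu
        · have hyB : y ∈ B \ u.1 := Finset.mem_sdiff.2 ⟨hy, hyu⟩
          rw [hxeq] at hyB
          have hyx : y = x := Finset.mem_singleton.1 hyB
          have hqB : q ∈ B \ u.1 := Finset.mem_sdiff.2 ⟨hcc.2 hqv, hqu⟩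
          rw [hxeq] at hqB
          have : q = x := Finset.mem_singleton.1 hqB
          rw [hveq, hyx, ← this]
          exact Finset.mem_insert_self _ _
      · exact hcc.2
    have hCmem : u.1 ∩ B ∈ G.sets := G.inter_mem _ u.2 _ hBmem
    set C : {A : Finset α // A ∈ G.sets} := ⟨u.1 ∩ B, hCmem⟩
    have hJmem : G.cl (B ∪ v.1) ∈ G.sets := G.clMem _
    set J : {A : Finset α // A ∈ G.sets} := ⟨G.cl (B ∪ v.1), hJmem⟩
    have hBJ : B ⊆ J.1 := (Finset.subset_union_left).trans
      (G.subset_cl (Finset.union_subset (G.subset_ground _ hBmem) (G.subset_ground _ v.2)))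
    have hvJ : v.1 ⊆ J.1 := (Finset.subset_union_right).trans
      (G.subset_cl (Finset.union_subset (G.subset_ground _ hBmem) (G.subset_ground _ v.2)))
    have r1 : (G.hasse \ SimpleGraph.fromEdgeSet {s(u, v)}).Reachable C u :=
      G.reach_interval u v _ C u rfl Finset.inter_subset_left
        (Or.inr (fun ⟨_, h2⟩ => hvu h2))
    have r2 : (G.hasse \ SimpleGraph.fromEdgeSet {s(u, v)}).Reachable C ⟨B, hBmem⟩ :=
      G.reach_interval u v _ C ⟨B, hBmem⟩ rfl Finset.inter_subset_right
        (hnotboth.elim (fun h => Or.inl (fun hc => h hc.2))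
          (fun h => Or.inr (fun hc => h hc.2)))
    have r3 : (G.hasse \ SimpleGraph.fromEdgeSet {s(u, v)}).Reachable ⟨B, hBmem⟩ J :=
      G.reach_interval u v _ _ J rfl hBJ (Or.inl (fun ⟨h1, _⟩ => hnBu h1))
    have r4 : (G.hasse \ SimpleGraph.fromEdgeSet {s(u, v)}).Reachable v J :=
      G.reach_interval u v _ v J rfl hvJ (Or.inl (fun ⟨h1, _⟩ => hvu h1))
    exact (r1.symm.trans r2).trans (r3.trans r4.symm)
  · -- u is a copoint attached to q
    push_neg at hB
    have hvcard : (v.1 \ u.1).card = 1 := by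
      rw [hveq, Finset.insert_sdiff_of_notMem _ hqu, Finset.sdiff_self]
      simp
    have hcop : G.IsCopoint u.1 := by
      refine ⟨u.2, v.1, ⟨v.2, hvcard⟩, fun B hBp => ?_⟩
      by_contra hne
      exact absurd hBp.2 (hB B hBp.1 hne)
    have hatt : G.Attached u.1 q := by
      refine ⟨hcop, v.1, v.2, ?_⟩
      rw [hveq, Finset.insert_sdiff_of_notMem _ hqu, Finset.sdiff_self]
      rfl
    obtain ⟨h1, _⟩ := H u.1 q hatt
    obtain ⟨a, hau, hacl⟩ := Finset.not_subset.1 h1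
    have haX : a ∈ G.X := G.subset_ground _ u.2 hau
    have : ∃ F ∈ G.sets, ({q} : Finset α) ⊆ F ∧ a ∉ F := by
      by_contra hc
      push_neg at hc
      exact hacl (G.mem_cl.2 ⟨haX, fun A hA hqA => hc A hA hqA⟩)
    obtain ⟨F, hFmem, hqF', haF⟩ := this
    have hqF : q ∈ F := Finset.singleton_subset_iff.1 hqF'
    have hnuF : ¬ u.1 ⊆ F := fun h => haF (h hau)
    have hnFu : ¬ F ⊆ u.1 := fun h => hqu (h hqF)
    have hCmem : u.1 ∩ F ∈ G.sets := G.inter_mem _ u.2 _ hFmem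
    have hJmem : G.cl (F ∪ v.1) ∈ G.sets := G.clMem _
    set J : {A : Finset α // A ∈ G.sets} := ⟨G.cl (F ∪ v.1), hJmem⟩
    have hFJ : F ⊆ J.1 := (Finset.subset_union_left).trans
      (G.subset_cl (Finset.union_subset (G.subset_ground _ hFmem) (G.subset_ground _ v.2)))
    have hvJ : v.1 ⊆ J.1 := (Finset.subset_union_right).trans
      (G.subset_cl (Finset.union_subset (G.subset_ground _ hFmem) (G.subset_ground _ v.2)))
    have r1 : (G.hasse \ SimpleGraph.fromEdgeSet {s(u, v)}).Reachable ⟨u.1 ∩ F, hCmem⟩ u :=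
      G.reach_interval u v _ _ u rfl Finset.inter_subset_left
        (Or.inr (fun ⟨_, h2⟩ => hvu h2))
    have r2 : (G.hasse \ SimpleGraph.fromEdgeSet {s(u, v)}).Reachable ⟨u.1 ∩ F, hCmem⟩
        ⟨F, hFmem⟩ :=
      G.reach_interval u v _ _ _ rfl Finset.inter_subset_right
        (Or.inl (fun ⟨_, h2⟩ => hnuF h2))
    have r3 : (G.hasse \ SimpleGraph.fromEdgeSet {s(u, v)}).Reachable ⟨F, hFmem⟩ J :=
      G.reach_interval u v _ _ J rfl hFJ (Or.inl (fun ⟨h1', _⟩ => hnFu h1'))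
    have r4 : (G.hasse \ SimpleGraph.fromEdgeSet {s(u, v)}).Reachable v J :=
      G.reach_interval u v _ v J rfl hvJ (Or.inl (fun ⟨h1', _⟩ => hvu h1'))
    exact (r1.symm.trans r2).trans (r3.trans r4.symm)

theorem ConvexGeom.hasse_reach_up (G : ConvexGeom α) :
    ∀ (n : ℕ) (S T : {A : Finset α // A ∈ G.sets}), (T.1 \ S.1).card = n → S.1 ⊆ T.1 →
    G.hasse.Reachable S T := by
  intro n
  induction n using Nat.strong_induction_on with
  | _ n ih =>
  intro S T hcard hST
  rcases eq_or_ne S T with rfl | hne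
  · exact SimpleGraph.Reachable.refl _
  have hne1 : S.1 ≠ T.1 := fun h => hne (Subtype.ext h)
  obtain ⟨x, hxT, hxS, hins⟩ := G.ext_point S.2 T.2 hST hne1
  have hadj := G.hasse_adj_insert S.2 hxS hins
  have hcard2 : (T.1 \ insert x S.1).card < n := by
    rw [← hcard]
    apply Finset.card_lt_card
    rw [Finset.ssubset_iff_of_subset
      (Finset.sdiff_subset_sdiff (Finset.Subset.refl _) (Finset.subset_insert _ _))]
    exact ⟨x, Finset.mem_sdiff.2 ⟨hxT, hxS⟩, by simp⟩
  exact hadj.reachable.trans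
    (ih _ hcard2 ⟨insert x S.1, hins⟩ T rfl (Finset.insert_subset hxT hST))

theorem reach_invariant {V : Type*} {G' : SimpleGraph V} (P : V → Prop)
    (h : ∀ u v, G'.Adj u v → (P u ↔ P v)) {u v : V} (hr : G'.Reachable u v) :
    P u ↔ P v := by
  obtain ⟨w⟩ := hr
  induction w with
  | nil => exact Iff.rfl
  | cons hadj _ ih => exact (h _ _ hadj).trans ih

/-- Every copoint `B` is incomparable with `L({α(B)})` iff the Hasse diagram
of the lattice of closed sets has no cut edge (i.e. the convex geometry is 2-edge-connected). -/
theorem copoints_incomparable_iff_twoEdgeConnected (G : ConvexGeom α) :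
    (∀ (B : Finset α) (p : α), G.Attached B p → ¬ B ⊆ G.cl {p} ∧ ¬ G.cl {p} ⊆ B) ↔
      ∀ e, ¬ G.hasse.IsBridge e := by
  constructor
  · intro H e
    induction e using Sym2.ind with
    | _ u v =>
      rw [SimpleGraph.isBridge_iff]
      intro hnr
      by_cases hadj : G.hasse.Adj u v
      swap
      · have hu := G.hasse_reach_up _ u ⟨G.X, G.ground_mem⟩ rfl (G.subset_ground _ u.2)
        have hv := G.hasse_reach_up _ v ⟨G.X, G.ground_mem⟩ rfl (G.subset_ground _ v.2)
        refine hnr (SimpleGraph.Reachable.mono ?_ (hu.trans hv.symm))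
        intro a b hab
        rw [SimpleGraph.deleteEdges_adj]
        refine ⟨hab, fun hmem => hadj ?_⟩
        rcases Sym2.eq_iff.1 (Set.mem_singleton_iff.1 hmem) with ⟨h1, h2⟩ | ⟨h1, h2⟩
        · subst h1; subst h2; exact hab
        · subst h1; subst h2; exact hab.symm
      rcases hadj with ⟨hlt, hcov⟩ | ⟨hlt, hcov⟩
      · exact hnr (G.not_bridge_core H u v hlt hcov)
      · apply hnr
        have h := G.not_bridge_core H v u hlt hcov
        rw [Sym2.eq_swap] at h
        exact h.symm
  · intro hnb B p hatt
    obtain ⟨⟨hB, B0, hB0, huniq⟩, B', hB', hB'd⟩ := hatt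
    have hpB' : p ∈ B' := by
      have : p ∈ B' \ B := hB'd ▸ Finset.mem_singleton_self p
      exact (Finset.mem_sdiff.1 this).1
    have hpB : p ∉ B := by
      have : p ∈ B' \ B := hB'd ▸ Finset.mem_singleton_self p
      exact (Finset.mem_sdiff.1 this).2
    have hpX : p ∈ G.X := G.subset_ground _ hB' hpB'
    have hBX : B ⊆ G.X := G.subset_ground _ hB
    have hBneX : B ≠ G.X := fun h => hpB (h ▸ hpX)
    obtain ⟨x, hxX, hxB, hins⟩ := G.ext_point hB G.ground_mem hBX hBneX
    have h1 : insert x B = B0 := huniq _ ⟨hins, by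
      rw [Finset.insert_sdiff_of_notMem _ hxB, Finset.sdiff_self]; simp⟩
    have h2 : B' = B0 := huniq _ ⟨hB', by rw [hB'd]; simp⟩
    have hxB' : insert x B = B' := h1.trans h2.symm
    have hxp : x = p := by
      have hx1 : x ∈ B' \ B := Finset.mem_sdiff.2 ⟨hxB' ▸ Finset.mem_insert_self _ _, hxB⟩
      rw [hB'd] at hx1
      exact Finset.mem_singleton.1 hx1
    have hB'eq : B' = insert p B := by rw [← hxB', hxp]
    subst hB'eq
    have huniq' : ∀ E ∈ G.sets, (E \ B).card = 1 → E = insert p B := by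
      intro E hE hcard
      exact (huniq E ⟨hE, hcard⟩).trans h2.symm
    constructor
    · intro hsub
      apply hnb s(⟨B, hB⟩, ⟨insert p B, hB'⟩)
      rw [SimpleGraph.isBridge_iff]
      intro hr
      have key : ∀ (U W : {A : Finset α // A ∈ G.sets}), U.1 ⊂ W.1 →
          (∀ C ∈ G.sets, ¬ (U.1 ⊂ C ∧ C ⊂ W.1)) →
          s(U, W) ≠ s((⟨B, hB⟩ : {A : Finset α // A ∈ G.sets}), ⟨insert p B, hB'⟩) →
          (p ∈ U.1 ↔ p ∈ W.1) := by
        intro U W hlt hcov hnee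
        constructor
        · exact fun hpU => hlt.1 hpU
        · intro hpW
          by_contra hpU
          obtain ⟨y, hyU, hWeq⟩ := G.cover_eq_insert U.2 W.2 hlt hcov
          have hyp : y = p := by
            have := hWeq ▸ hpW
            rcases Finset.mem_insert.1 this with h | h
            · exact h.symm
            · exact absurd h hpU
          rw [hyp] at hyU hWeq
          have hBW : B ⊆ W.1 := by
            intro b hb
            have hbcl : b ∈ G.cl {p} := hsub hb
            exact (G.mem_cl.1 hbcl).2 W.1 W.2 (Finset.singleton_subset_iff.2 hpW)
          have hBU : B ⊆ U.1 := by
            intro b hb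
            rcases Finset.mem_insert.1 (hWeq ▸ hBW hb) with h | h
            · exact absurd (h ▸ hb) hpB
            · exact h
          have hUB : U.1 = B := by
            by_contra hneUB
            obtain ⟨z, hzU, hzB, hinsz⟩ := G.ext_point hB U.2 hBU (fun h => hneUB h.symm)
            have hz : insert z B = insert p B := huniq' _ hinsz (by
              rw [Finset.insert_sdiff_of_notMem _ hzB, Finset.sdiff_self]; simp)
            have hzp : z = p := by
              have : z ∈ insert p B := hz ▸ Finset.mem_insert_self _ _
              rcases Finset.mem_insert.1 this with h | h
              · exact h
              · exact absurd h hzB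
            exact hyU (hzp ▸ hzU)
          apply hnee
          have hU : U = ⟨B, hB⟩ := Subtype.ext hUB
          have hW : W = ⟨insert p B, hB'⟩ := Subtype.ext (by rw [hWeq, hUB])
          rw [hU, hW]
      have hiff := reach_invariant (fun W => p ∈ W.1) ?_ hr
      · exact hpB (hiff.2 (Finset.mem_insert_self _ _))
      · intro U W hUW
        rw [SimpleGraph.deleteEdges, SimpleGraph.sdiff_adj] at hUW
        obtain ⟨hh, hnotE⟩ := hUW
        have hneUW : U ≠ W := hh.ne
        have hnee : s(U, W) ≠ s((⟨B, hB⟩ : {A : Finset α // A ∈ G.sets}), ⟨insert p B, hB'⟩) := by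
          intro he
          apply hnotE
          rw [SimpleGraph.fromEdgeSet_adj]
          exact ⟨he ▸ rfl, hneUW⟩
        rcases hh with ⟨hlt, hcov⟩ | ⟨hlt, hcov⟩
        · exact key U W hlt hcov hnee
        · exact (key W U hlt hcov (by rw [Sym2.eq_swap]; exact hnee)).symm
    · intro hsub
      have hpcl : p ∈ G.cl {p} :=
        G.mem_cl.2 ⟨hpX, fun A hA hpA => Finset.singleton_subset_iff.1 hpA⟩
      exact hpB (hsub hpcl)
end

section
/- Every atomic convex geometry (X,L) with |X| > 1 is 2-edge-connected: the Hasse diagram of its lattice of closed sets, viewed as an undirected graph, has no cut edge. -/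
variable {α : Type*} [DecidableEq α]

namespace ConvexGeom

variable (G : ConvexGeom α)

lemma mem_cl' {S : Finset α} {x : α} :
    x ∈ G.cl S ↔ x ∈ G.X ∧ ∀ A ∈ G.sets, S ⊆ A → x ∈ A := by
  simp [ConvexGeom.cl]

/-- there is a minimum closed superset of any `S ⊆ X`. -/
lemma exists_min_closed {S : Finset α} (hS : S ⊆ G.X) :
    ∃ M ∈ G.sets, S ⊆ M ∧ ∀ A ∈ G.sets, S ⊆ A → M ⊆ A := by
  classical
  have hXT : G.X ∈ G.sets.filter (fun A => S ⊆ A) :=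
    Finset.mem_filter.2 ⟨G.ground_mem, hS⟩
  obtain ⟨M, hMT, hmin⟩ := (G.sets.filter (fun A => S ⊆ A)).exists_min_image
    Finset.card ⟨_, hXT⟩
  rw [Finset.mem_filter] at hMT
  refine ⟨M, hMT.1, hMT.2, ?_⟩
  intro A hA hSA
  have h1 : M ∩ A ∈ G.sets.filter (fun A => S ⊆ A) :=
    Finset.mem_filter.2 ⟨G.inter_mem _ hMT.1 _ hA, Finset.subset_inter hMT.2 hSA⟩
  have h2 := hmin _ h1
  have h3 : M ∩ A = M :=
    Finset.eq_of_subset_of_card_le Finset.inter_subset_left h2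
  rw [← h3]
  exact Finset.inter_subset_right

lemma cl_spec {S : Finset α} (hS : S ⊆ G.X) :
    G.cl S ∈ G.sets ∧ S ⊆ G.cl S ∧ ∀ A ∈ G.sets, S ⊆ A → G.cl S ⊆ A := by
  obtain ⟨M, hM, hSM, hmin⟩ := G.exists_min_closed hS
  have hclM : G.cl S = M := by
    apply Finset.Subset.antisymm
    · intro x hx
      exact ((G.mem_cl').1 hx).2 M hM hSM
    · intro x hx
      exact (G.mem_cl').2 ⟨G.subset_ground M hM hx, fun A hA hSA => hmin A hA hSA hx⟩
  constructor
  · rw [hclM]; exact hM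
  constructor
  · intro x hx; exact (G.mem_cl').2 ⟨hS hx, fun A hA hSA => hSA hx⟩
  · intro A hA hSA; rw [hclM]; exact hmin A hA hSA

lemma singleton_closed (hatomic : ∀ p ∈ G.X, G.cl {p} = {p}) {p : α} (hp : p ∈ G.X) :
    {p} ∈ G.sets := by
  have := (G.cl_spec (S := {p}) (by simpa using hp)).1
  rwa [hatomic p hp] at this

/-- one-point extension: any closed proper subset of a closed set can be extended by
one point inside. -/
lemma exists_extension {A B : Finset α} (hA : A ∈ G.sets) (hB : B ∈ G.sets)
    (hsub : A ⊆ B) (hne : A ≠ B) : ∃ x ∈ B, x ∉ A ∧ insert x A ∈ G.sets := by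
  classical
  have hBA : (B \ A).Nonempty := by
    rw [Finset.sdiff_nonempty]
    intro h
    exact hne (Finset.Subset.antisymm hsub h)
  obtain ⟨x, hxBA, hminx⟩ :=
    (B \ A).exists_min_image (fun z => (G.cl (insert z A)).card) hBA
  rw [Finset.mem_sdiff] at hxBA
  obtain ⟨hxB, hxA⟩ := hxBA
  have hAX : A ⊆ G.X := G.subset_ground A hA
  have hxX : x ∈ G.X := G.subset_ground B hB hxB
  have hinsX : insert x A ⊆ G.X := Finset.insert_subset hxX hAX
  obtain ⟨hcl, hsubcl, hmincl⟩ := G.cl_spec hinsX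
  refine ⟨x, hxB, hxA, ?_⟩
  suffices h : G.cl (insert x A) = insert x A by rw [← h]; exact hcl
  apply Finset.Subset.antisymm _ hsubcl
  intro y hy
  by_contra hyA
  have hyX : y ∈ G.X := ((G.mem_cl').1 hy).1
  have hyall : ∀ A' ∈ G.sets, insert x A ⊆ A' → y ∈ A' := ((G.mem_cl').1 hy).2
  have hxy : x ≠ y := fun h => hyA (h ▸ Finset.mem_insert_self x A)
  have hyA' : y ∉ A := fun h => hyA (Finset.mem_insert_of_mem h)
  have hae := G.anti_exchange A hA x hxX y hyX hxA hyA' hxy hyall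
  push_neg at hae
  obtain ⟨A', hA's, hsubA', hxA'⟩ := hae
  have hyB : y ∈ B := hyall B hB (Finset.insert_subset hxB hsub)
  have hymem : y ∈ B \ A := Finset.mem_sdiff.2 ⟨hyB, hyA'⟩
  have h1 : insert y A ⊆ G.cl (insert x A) :=
    Finset.insert_subset hy (fun a ha => hsubcl (Finset.mem_insert_of_mem ha))
  have hyinsX : insert y A ⊆ G.X := Finset.insert_subset hyX hAX
  have h2 : G.cl (insert y A) ⊆ G.cl (insert x A) :=
    (G.cl_spec hyinsX).2.2 _ hcl h1
  have hxnot : x ∉ G.cl (insert y A) := by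
    intro hx'
    exact hxA' ((G.cl_spec hyinsX).2.2 A' hA's hsubA' hx')
  have hxin : x ∈ G.cl (insert x A) := hsubcl (Finset.mem_insert_self x A)
  have hlt : (G.cl (insert y A)).card < (G.cl (insert x A)).card :=
    Finset.card_lt_card ⟨h2, fun h => hxnot (h hxin)⟩
  have := hminx y hymem
  omega

/-- a second extreme point: any closed set with at least 2 elements has an extreme
point different from any prescribed element. -/
lemma second_extreme (hatomic : ∀ p ∈ G.X, G.cl {p} = {p}) {B : Finset α}
    (hB : B ∈ G.sets) (h2 : 2 ≤ B.card) {x : α} (hx : x ∈ B) :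
    ∃ y ∈ B, y ≠ x ∧ B.erase y ∈ G.sets := by
  classical
  by_contra hcon
  push_neg at hcon
  have hxX : x ∈ G.X := G.subset_ground B hB hx
  have hsing : {x} ∈ G.sets := G.singleton_closed hatomic hxX
  have hsingT : ({x} : Finset α) ∈ G.sets.filter (fun C => C ⊆ B ∧ C ≠ B ∧ x ∈ C) := by
    refine Finset.mem_filter.2 ⟨hsing, Finset.singleton_subset_iff.2 hx, ?_,
      Finset.mem_singleton_self x⟩
    intro h
    rw [← h] at h2
    simp at h2
  obtain ⟨M, hMT, hmax⟩ := (G.sets.filter (fun C => C ⊆ B ∧ C ≠ B ∧ x ∈ C)).exists_max_image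
    Finset.card ⟨_, hsingT⟩
  rw [Finset.mem_filter] at hMT
  obtain ⟨hM, hMB, hMne, hxM⟩ := hMT
  obtain ⟨z, hzB, hzM, hins⟩ := G.exists_extension hM hB hMB hMne
  have hsubB : insert z M ⊆ B := Finset.insert_subset hzB hMB
  have hzx : z ≠ x := fun h => hzM (h ▸ hxM)
  have heq : insert z M = B := by
    by_contra hneq
    have hmem : insert z M ∈ G.sets.filter (fun C => C ⊆ B ∧ C ≠ B ∧ x ∈ C) :=
      Finset.mem_filter.2 ⟨hins, hsubB, hneq, Finset.mem_insert_of_mem hxM⟩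
    have := hmax _ hmem
    rw [Finset.card_insert_of_notMem hzM] at this
    omega
  have herase : B.erase z ∈ G.sets := by
    rw [← heq, Finset.erase_insert hzM]
    exact hM
  exact hcon z hzB hzx herase

lemma hasse_adj_insert_s3 {U V : Finset α} (hU : U ∈ G.sets) (hV : V ∈ G.sets)
    (hUV : U ⊆ V) (hc : V.card = U.card + 1) : G.hasse.Adj ⟨U, hU⟩ ⟨V, hV⟩ := by
  left
  constructor
  · refine hUV.ssubset_of_ne ?_
    intro h
    rw [h] at hc
    omega
  · rintro C hC ⟨h1, h2⟩
    have h3 : U.card < C.card := Finset.card_lt_card h1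
    have h4 : C.card < V.card := Finset.card_lt_card h2
    omega

lemma reach_chain (e : Sym2 {A : Finset α // A ∈ G.sets})
    (he : ∀ C D : {A : Finset α // A ∈ G.sets}, C.1.Nonempty → D.1.Nonempty →
      s(C, D) ≠ e) :
    ∀ (U V : {A : Finset α // A ∈ G.sets}), U.1.Nonempty → U.1 ⊆ V.1 →
      (G.hasse \ SimpleGraph.fromEdgeSet {e}).Reachable U V := by
  classical
  have key : ∀ (n : ℕ) (U V : {A : Finset α // A ∈ G.sets}),
      (V.1 \ U.1).card ≤ n → U.1.Nonempty → U.1 ⊆ V.1 →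
      (G.hasse \ SimpleGraph.fromEdgeSet {e}).Reachable U V := by
    intro n
    induction n with
    | zero =>
      intro U V hc _ hsub
      have hemp : V.1 \ U.1 = ∅ := Finset.card_eq_zero.1 (Nat.le_zero.1 hc)
      have hVU : V.1 ⊆ U.1 := by
        intro a ha
        by_contra h
        have hmem : a ∈ V.1 \ U.1 := Finset.mem_sdiff.2 ⟨ha, h⟩
        rw [hemp] at hmem
        simp at hmem
      have : U = V := Subtype.ext (Finset.Subset.antisymm hsub hVU)
      rw [this]
    | succ n ih =>
      intro U V hc hne hsub
      by_cases hUV : U.1 = V.1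
      · rw [Subtype.ext hUV]
      obtain ⟨x, hxV, hxU, hins⟩ := G.exists_extension U.2 V.2 hsub hUV
      have hWsub : insert x U.1 ⊆ V.1 := Finset.insert_subset hxV hsub
      have hadj : G.hasse.Adj U ⟨insert x U.1, hins⟩ :=
        G.hasse_adj_insert_s3 U.2 hins (Finset.subset_insert x U.1)
          (Finset.card_insert_of_notMem hxU)
      have hadj' : (G.hasse \ SimpleGraph.fromEdgeSet {e}).Adj U ⟨insert x U.1, hins⟩ := by
        rw [SimpleGraph.sdiff_adj]
        refine ⟨hadj, ?_⟩
        rw [SimpleGraph.fromEdgeSet_adj]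
        rintro ⟨hmem, -⟩
        exact he U ⟨insert x U.1, hins⟩ hne ⟨x, Finset.mem_insert_self x U.1⟩
          (by simpa using hmem)
      refine hadj'.reachable.trans (ih ⟨insert x U.1, hins⟩ V ?_
        ⟨x, Finset.mem_insert_self x U.1⟩ hWsub)
      have hsd : V.1 \ insert x U.1 = (V.1 \ U.1).erase x := by
        ext a
        simp only [Finset.mem_sdiff, Finset.mem_insert, Finset.mem_erase]
        tauto
      rw [hsd, Finset.card_erase_of_mem (Finset.mem_sdiff.2 ⟨hxV, hxU⟩)]
      omega
  intro U V hne hsub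
  exact key _ U V le_rfl hne hsub

lemma main_aux (hatomic : ∀ p ∈ G.X, G.cl {p} = {p}) (hcard : 1 < G.X.card)
    (v w : {A : Finset α // A ∈ G.sets}) (h : v.1 ⊂ w.1)
    (hbet : ∀ C ∈ G.sets, ¬(v.1 ⊂ C ∧ C ⊂ w.1)) :
    (G.hasse \ SimpleGraph.fromEdgeSet {s(v, w)}).Reachable v w := by
  classical
  have hvw : v ≠ w := fun hh => h.ne (congrArg Subtype.val hh)
  obtain ⟨x, hxw, hxv, hins⟩ := G.exists_extension v.2 w.2 h.subset
    (fun hh => h.ne hh)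
  have hw1 : w.1 = insert x v.1 := by
    have hsub : insert x v.1 ⊆ w.1 := Finset.insert_subset hxw h.subset
    by_contra hne
    exact hbet _ hins ⟨Finset.ssubset_insert hxv, hsub.ssubset_of_ne (fun hh => hne hh.symm)⟩
  have hxX : x ∈ G.X := G.subset_ground w.1 w.2 hxw
  by_cases hv : v.1 = ∅
  · -- the edge is ∅ — {x}; reroute through another atom {q} and the ground set X
    have hwx : w.1 = {x} := by rw [hw1, hv]; rfl
    obtain ⟨q, hqX, hqx⟩ := Finset.exists_mem_ne hcard x
    have hq : {q} ∈ G.sets := G.singleton_closed hatomic hqX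
    have he : ∀ C D : {A : Finset α // A ∈ G.sets}, C.1.Nonempty → D.1.Nonempty →
        s(C, D) ≠ s(v, w) := by
      intro C D hC hD hcontra
      rw [Sym2.eq_iff] at hcontra
      rcases hcontra with ⟨h1, h2⟩ | ⟨h1, h2⟩
      · rw [h1] at hC; rw [hv] at hC; simp at hC
      · rw [h2] at hD; rw [hv] at hD; simp at hD
    have hqne : ({q} : Finset α) ≠ w.1 := by
      rw [hwx]
      intro hh
      exact hqx (Finset.singleton_injective hh)
    have hadj1 : (G.hasse \ SimpleGraph.fromEdgeSet {s(v, w)}).Adj v ⟨{q}, hq⟩ := by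
      rw [SimpleGraph.sdiff_adj]
      constructor
      · exact G.hasse_adj_insert_s3 v.2 hq (by rw [hv]; exact Finset.empty_subset _)
          (by rw [hv]; simp)
      · rw [SimpleGraph.fromEdgeSet_adj]
        rintro ⟨hmem, -⟩
        rw [Set.mem_singleton_iff, Sym2.eq_iff] at hmem
        rcases hmem with ⟨h1, h2⟩ | ⟨h1, h2⟩
        · exact hqne (congrArg Subtype.val h2)
        · exact hvw h1
    have he2 := he
    have step2 := G.reach_chain _ he ⟨{q}, hq⟩ ⟨G.X, G.ground_mem⟩
      ⟨q, Finset.mem_singleton_self q⟩ (Finset.singleton_subset_iff.2 hqX)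
    have step3 := G.reach_chain _ he2 w ⟨G.X, G.ground_mem⟩
      ⟨x, hxw⟩ (G.subset_ground w.1 w.2)
    exact hadj1.reachable.trans (step2.trans step3.symm)
  · -- v is nonempty: build a diamond using a second extreme point of w
    have hvne : v.1.Nonempty := Finset.nonempty_iff_ne_empty.2 hv
    have hcv : 1 ≤ v.1.card := Finset.card_pos.2 hvne
    have hcw : w.1.card = v.1.card + 1 := by
      rw [hw1, Finset.card_insert_of_notMem hxv]
    obtain ⟨y, hyw, hyx, herase⟩ := G.second_extreme hatomic w.2 (by omega) hxw
    have hvx : v.1 = w.1.erase x := by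
      rw [hw1, Finset.erase_insert hxv]
    have hyv : y ∈ v.1 := by
      rw [hvx]
      exact Finset.mem_erase.2 ⟨hyx, hyw⟩
    have hxA' : x ∈ w.1.erase y := Finset.mem_erase.2 ⟨fun hh => hyx hh.symm, hxw⟩
    have hC : v.1 ∩ w.1.erase y ∈ G.sets := G.inter_mem _ v.2 _ herase
    have hCeq : v.1 ∩ w.1.erase y = v.1.erase y := by
      ext a
      simp only [Finset.mem_inter, Finset.mem_erase]
      constructor
      · rintro ⟨h1, h2, h3⟩; exact ⟨h2, h1⟩
      · rintro ⟨h1, h2⟩; exact ⟨h2, h1, h.subset h2⟩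
    have hcC : (v.1 ∩ w.1.erase y).card + 1 = v.1.card := by
      rw [hCeq, Finset.card_erase_of_mem hyv]
      omega
    have hcA' : (w.1.erase y).card = v.1.card := by
      rw [Finset.card_erase_of_mem hyw]
      omega
    set vC : {A : Finset α // A ∈ G.sets} := ⟨v.1 ∩ w.1.erase y, hC⟩
    set vA' : {A : Finset α // A ∈ G.sets} := ⟨w.1.erase y, herase⟩
    have hA'nev : vA' ≠ v := by
      intro hh
      have : w.1.erase y = v.1 := congrArg Subtype.val hh
      rw [← this] at hxv
      exact hxv hxA'
    have hA'new : vA' ≠ w := by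
      intro hh
      have h5 : w.1.erase y = w.1 := congrArg Subtype.val hh
      have h6 : (w.1.erase y).card = w.1.card - 1 := Finset.card_erase_of_mem hyw
      rw [h5] at h6
      omega
    have hCnev : vC ≠ v := by
      intro hh
      have h5 : v.1 ∩ w.1.erase y = v.1 := congrArg Subtype.val hh
      have h6 : (v.1 ∩ w.1.erase y).card = v.1.card := by rw [h5]
      omega
    have hCnew : vC ≠ w := by
      intro hh
      have h5 : v.1 ∩ w.1.erase y = w.1 := congrArg Subtype.val hh
      have h6 : (v.1 ∩ w.1.erase y).card = w.1.card := by rw [h5]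
      omega
    -- hasse adjacencies
    have hadjCv : G.hasse.Adj vC v :=
      G.hasse_adj_insert_s3 hC v.2 Finset.inter_subset_left (by omega)
    have hadjCA' : G.hasse.Adj vC vA' :=
      G.hasse_adj_insert_s3 hC herase Finset.inter_subset_right (by omega)
    have hadjA'w : G.hasse.Adj vA' w :=
      G.hasse_adj_insert_s3 herase w.2 (Finset.erase_subset y w.1) (by omega)
    -- pruned adjacencies
    have hp1 : (G.hasse \ SimpleGraph.fromEdgeSet {s(v, w)}).Adj v vC := by
      rw [SimpleGraph.sdiff_adj]
      refine ⟨hadjCv.symm, ?_⟩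
      rw [SimpleGraph.fromEdgeSet_adj]
      rintro ⟨hmem, -⟩
      rw [Set.mem_singleton_iff, Sym2.eq_iff] at hmem
      rcases hmem with ⟨h1, h2⟩ | ⟨h1, h2⟩
      · exact hCnew h2
      · exact hvw h1
    have hp2 : (G.hasse \ SimpleGraph.fromEdgeSet {s(v, w)}).Adj vC vA' := by
      rw [SimpleGraph.sdiff_adj]
      refine ⟨hadjCA', ?_⟩
      rw [SimpleGraph.fromEdgeSet_adj]
      rintro ⟨hmem, -⟩
      rw [Set.mem_singleton_iff, Sym2.eq_iff] at hmem
      rcases hmem with ⟨h1, h2⟩ | ⟨h1, h2⟩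
      · exact hCnev h1
      · exact hCnew h1
    have hp3 : (G.hasse \ SimpleGraph.fromEdgeSet {s(v, w)}).Adj vA' w := by
      rw [SimpleGraph.sdiff_adj]
      refine ⟨hadjA'w, ?_⟩
      rw [SimpleGraph.fromEdgeSet_adj]
      rintro ⟨hmem, -⟩
      rw [Set.mem_singleton_iff, Sym2.eq_iff] at hmem
      rcases hmem with ⟨h1, h2⟩ | ⟨h1, h2⟩
      · exact hA'nev h1
      · exact hA'new h1
    exact hp1.reachable.trans (hp2.reachable.trans hp3.reachable)

end ConvexGeom

/-- Every atomic convex geometry with more than one point is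
2-edge-connected: the Hasse diagram of its lattice of closed sets has no cut edge. -/
theorem atomic_twoEdgeConnected (G : ConvexGeom α)
    (hatomic : ∀ p ∈ G.X, G.cl {p} = {p}) (hcard : 1 < G.X.card) :
    ∀ e, ¬ (e ∈ G.hasse.edgeSet ∧ G.hasse.IsBridge e) := by
  intro e
  refine Sym2.ind (fun v w => ?_) e
  rw [SimpleGraph.mem_edgeSet, SimpleGraph.isBridge_iff]
  rintro ⟨hadj, hreach⟩
  apply hreach
  rcases hadj with ⟨h1, h2⟩ | ⟨h1, h2⟩
  · exact G.main_aux hatomic hcard v w h1 h2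
  · have := G.main_aux hatomic hcard w v h1 h2
    have hswap : s(v, w) = s(w, v) := Sym2.eq_swap
    rw [hswap]
    exact this.symm
end

section
/- Let (X,L) be a 2-edge-connected convex geometry with lattice of closed sets ℒ = (𝒞, ⊆). Then the order dimension of ℒ is at least the chromatic number of the copoint graph 𝒢((X,L)): dim(ℒ) ≥ χ(𝒢((X,L))). -/
variable {α : Type*} [DecidableEq α]

lemma ConvexGeom.attached_eq (G : ConvexGeom α) {A : Finset α} {p q : α}
    (hp : G.Attached A p) (hq : G.Attached A q) : p = q := by
  obtain ⟨⟨hAmem, B₀, hB₀, huniq⟩, B, hB, hBA⟩ := hp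
  obtain ⟨-, C, hC, hCA⟩ := hq
  have hB' : B = B₀ := huniq B ⟨hB, by rw [hBA, Finset.card_singleton]⟩
  have hC' : C = B₀ := huniq C ⟨hC, by rw [hCA, Finset.card_singleton]⟩
  have h : ({p} : Finset α) = {q} := by rw [← hBA, ← hCA, hB', hC']
  exact Finset.singleton_injective h

lemma ConvexGeom.exists_inter (G : ConvexGeom α) {F : Finset (Finset α)} (hne : F.Nonempty)
    (hsub : ∀ A ∈ F, A ∈ G.sets) :
    ∃ C ∈ G.sets, ∀ x, x ∈ C ↔ ∀ A ∈ F, x ∈ A := by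
  induction hne using Finset.Nonempty.cons_induction with
  | singleton a => exact ⟨a, hsub a (by simp), by simp⟩
  | cons a s ha hs ih =>
    obtain ⟨C, hC, hCmem⟩ := ih (fun A hA => hsub A (Finset.mem_cons_of_mem hA))
    refine ⟨a ∩ C, G.inter_mem a (hsub a (Finset.mem_cons_self _ _)) C hC, fun x => ?_⟩
    simp [Finset.mem_cons, hCmem, or_imp, forall_and]

lemma ConvexGeom.cl_singleton_mem (G : ConvexGeom α) {p : α} (hp : p ∈ G.X) :
    G.cl {p} ∈ G.sets := by
  classical
  have hne : (G.sets.filter fun A => p ∈ A).Nonempty :=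
    ⟨G.X, Finset.mem_filter.2 ⟨G.ground_mem, hp⟩⟩
  obtain ⟨C, hC, hmem⟩ := G.exists_inter hne (fun A hA => (Finset.mem_filter.1 hA).1)
  have heq : G.cl {p} = C := by
    ext x
    rw [hmem]
    simp only [ConvexGeom.cl, Finset.mem_filter, Finset.singleton_subset_iff]
    constructor
    · rintro ⟨hx, h⟩ A ⟨hA1, hA2⟩
      exact h A hA1 hA2
    · intro h
      exact ⟨h G.X ⟨G.ground_mem, hp⟩, fun A hA hpA => h A ⟨hA, hpA⟩⟩
  rw [heq]; exact hC

lemma ConvexGeom.mem_cl_singleton (G : ConvexGeom α) {p : α} (hp : p ∈ G.X) :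
    p ∈ G.cl {p} := by
  simp only [ConvexGeom.cl, Finset.mem_filter, Finset.singleton_subset_iff]
  exact ⟨hp, fun A _ h => h⟩

lemma ConvexGeom.cl_singleton_subset (G : ConvexGeom α) {p : α} {B : Finset α}
    (hB : B ∈ G.sets) (hpB : p ∈ B) : G.cl {p} ⊆ B := fun x hx =>
  ((Finset.mem_filter.1 hx).2) B hB (Finset.singleton_subset_iff.2 hpB)

lemma ConvexGeom.exists_linext₀ (G : ConvexGeom α) :
    ∃ s : {A : Finset α // A ∈ G.sets} → {A : Finset α // A ∈ G.sets} → Prop,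
      IsLinearOrder _ s ∧ ∀ X Y, X.1 ⊆ Y.1 → s X Y := by
  haveI : IsPartialOrder {A : Finset α // A ∈ G.sets} (fun X Y => X.1 ⊆ Y.1) :=
    { refl := fun X => subset_refl _
      trans := fun X Y Z h1 h2 => h1.trans h2
      antisymm := fun X Y h1 h2 => Subtype.ext (subset_antisymm h1 h2) }
  obtain ⟨s, hlin, hle⟩ := extend_partialOrder (fun X Y : {A : Finset α // A ∈ G.sets} => X.1 ⊆ Y.1)
  exact ⟨s, hlin, fun X Y h => hle _ _ h⟩

lemma ConvexGeom.exists_linext (G : ConvexGeom α) (A B : {A : Finset α // A ∈ G.sets})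
    (h : ¬ A.1 ⊆ B.1) :
    ∃ s : {A : Finset α // A ∈ G.sets} → {A : Finset α // A ∈ G.sets} → Prop,
      IsLinearOrder _ s ∧ (∀ X Y, X.1 ⊆ Y.1 → s X Y) ∧ s B A := by
  haveI : IsPartialOrder {A : Finset α // A ∈ G.sets}
      (fun X Y => X.1 ⊆ Y.1 ∨ (X.1 ⊆ B.1 ∧ A.1 ⊆ Y.1)) :=
    { refl := fun X => Or.inl (subset_refl _)
      trans := by
        rintro X Y Z (h1 | ⟨h1, h1'⟩) (h2 | ⟨h2, h2'⟩)
        · exact Or.inl (h1.trans h2)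
        · exact Or.inr ⟨h1.trans h2, h2'⟩
        · exact Or.inr ⟨h1, h1'.trans h2⟩
        · exact absurd (h1'.trans h2) h
      antisymm := by
        rintro X Y (h1 | ⟨h1, h1'⟩) (h2 | ⟨h2, h2'⟩)
        · exact Subtype.ext (subset_antisymm h1 h2)
        · exact absurd ((h2'.trans h1).trans h2) h
        · exact absurd ((h1'.trans h2).trans h1) h
        · exact absurd (h2'.trans h1) h }
  obtain ⟨s, hlin, hle⟩ :=
    extend_partialOrder (fun X Y : {A : Finset α // A ∈ G.sets} => X.1 ⊆ Y.1 ∨ (X.1 ⊆ B.1 ∧ A.1 ⊆ Y.1))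
  exact ⟨s, hlin, fun X Y hXY => hle _ _ (Or.inl hXY),
    hle _ _ (Or.inr ⟨subset_refl _, subset_refl _⟩)⟩

lemma ConvexGeom.exists_realizer (G : ConvexGeom α) : ∃ t, 0 < t ∧ G.HasRealizer t := by
  classical
  obtain ⟨s0, hs0, hext0⟩ := G.exists_linext₀
  have choice : ∀ P : {A : Finset α // A ∈ G.sets} × {A : Finset α // A ∈ G.sets},
      ∃ s : {A : Finset α // A ∈ G.sets} → {A : Finset α // A ∈ G.sets} → Prop,
      IsLinearOrder _ s ∧
      (∀ X Y, X.1 ⊆ Y.1 → s X Y) ∧ (¬ P.1.1 ⊆ P.2.1 → s P.2 P.1) := by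
    intro P
    by_cases h : P.1.1 ⊆ P.2.1
    · exact ⟨s0, hs0, hext0, fun h' => absurd h h'⟩
    · obtain ⟨s, h1, h2, h3⟩ := G.exists_linext P.1 P.2 h
      exact ⟨s, h1, h2, fun _ => h3⟩
  choose f hf1 hf2 hf3 using choice
  obtain ⟨e⟩ := Fintype.truncEquivFin
    ({A : Finset α // A ∈ G.sets} × {A : Finset α // A ∈ G.sets})
  refine ⟨_ + 1, Nat.succ_pos _,
    fun i => Fin.lastCases s0 (fun j => f (e.symm j)) i, ?_, ?_, ?_⟩
  · intro i
    induction i using Fin.lastCases with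
    | last => simp only [Fin.lastCases_last]; exact hs0
    | cast j => simp only [Fin.lastCases_castSucc]; exact hf1 _
  · intro i A B hAB
    induction i using Fin.lastCases with
    | last => simp only [Fin.lastCases_last]; exact hext0 _ _ hAB
    | cast j => simp only [Fin.lastCases_castSucc]; exact hf2 _ _ _ hAB
  · intro A B hAB
    by_contra h
    have h1 := hAB (Fin.castSucc (e (A, B)))
    simp only [Fin.lastCases_castSucc, Equiv.symm_apply_apply] at h1
    have h2 := hf3 (A, B) h
    haveI := hf1 (A, B)
    exact h (le_of_eq (congrArg Subtype.val (antisymm h1 h2)))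


/-- For a 2-edge-connected convex geometry, the order dimension of the
lattice of closed sets is at least the chromatic number of the copoint graph. -/
theorem chromaticNumber_copointGraph_le_orderDim (G : ConvexGeom α)
    (h2ec : ∀ e, ¬ G.hasse.IsBridge e) :
    G.copointGraph.chromaticNumber ≤ (G.orderDim : ℕ∞) := by
  classical
  have hne : {t : ℕ | 0 < t ∧ G.HasRealizer t}.Nonempty := G.exists_realizer
  have hmem : 0 < G.orderDim ∧ G.HasRealizer G.orderDim := Nat.sInf_mem hne
  obtain ⟨hpos, r, hlin, hext, hint⟩ := hmem
  have hatt : ∀ v : {A : Finset α // G.IsCopoint A}, ∃ p, G.Attached v.1 p := by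
    intro v
    obtain ⟨hA, B, ⟨hB, hcard⟩, -⟩ := v.2
    obtain ⟨p, hp⟩ := Finset.card_eq_one.1 hcard
    exact ⟨p, v.2, B, hB, hp⟩
  choose att hatt using hatt
  have hattX : ∀ v, att v ∈ G.X := by
    intro v
    obtain ⟨-, B, hB, hBA⟩ := hatt v
    exact G.subset_ground B hB (Finset.mem_sdiff.1 (hBA ▸ Finset.mem_singleton_self _)).1
  have hattnot : ∀ v, att v ∉ v.1 := by
    intro v
    obtain ⟨-, B, hB, hBA⟩ := hatt v
    exact (Finset.mem_sdiff.1 (hBA ▸ Finset.mem_singleton_self _)).2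
  -- lattice elements
  let Av : {A : Finset α // G.IsCopoint A} → {A : Finset α // A ∈ G.sets} :=
    fun v => ⟨v.1, v.2.1⟩
  let Cv : {A : Finset α // G.IsCopoint A} → {A : Finset α // A ∈ G.sets} :=
    fun v => ⟨G.cl {att v}, G.cl_singleton_mem (hattX v)⟩
  have hnotsub : ∀ v, ¬ (Cv v).1 ⊆ (Av v).1 := by
    intro v hsub
    exact hattnot v (hsub (G.mem_cl_singleton (hattX v)))
  have hcol : ∀ v, ∃ i, ¬ r i (Cv v) (Av v) := by
    intro v
    by_contra h
    push_neg at h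
    exact hnotsub v (hint _ _ h)
  choose c hc using hcol
  have hvalid : ∀ {u v}, G.copointGraph.Adj u v → c u ≠ c v := by
    intro u v huv hcc
    obtain ⟨hne', ⟨p, hpatt, hpv⟩, ⟨q, hqatt, hqu⟩⟩ := huv
    have hp : p = att u := G.attached_eq hpatt (hatt u)
    have hq : q = att v := G.attached_eq hqatt (hatt v)
    set i := c u with hi
    haveI := hlin i
    have h1 : r i (Av u) (Cv u) := (total_of (r i) _ _).resolve_left (hc u)
    have h2 : r i (Cv u) (Av v) :=
      hext i _ _ (G.cl_singleton_subset v.2.1 (hp ▸ hpv))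
    have h3 : r i (Av v) (Cv v) := by
      rw [hcc]; exact (total_of (r (c v)) _ _).resolve_left (hc v)
    have h4 : r i (Cv v) (Av u) :=
      hext i _ _ (G.cl_singleton_subset u.2.1 (hq ▸ hqu))
    have h5 : r i (Av u) (Av v) := Trans.trans h1 h2
    have h6 : r i (Av v) (Av u) := Trans.trans h3 h4
    have heq : Av u = Av v := antisymm h5 h6
    have huv1 : (Av u).1 = (Av v).1 := Subtype.ext_iff.1 heq
    exact hne' (Subtype.ext huv1)
  have hcolorable : G.copointGraph.Colorable G.orderDim :=
    ⟨SimpleGraph.Coloring.mk c fun huv => hvalid huv⟩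
  exact hcolorable.chromaticNumber_le
end

section
/- Let (X,L) be a convex geometry and let (A_1, …, A_l) be a minimal cycle of copoints of length l > 2. Then the attachment points are pairwise distinct: α(A_i) ≠ α(A_j) whenever i ≠ j. -/
variable {α : Type*} [DecidableEq α]

lemma two_l_mod (l x : ℕ) (hx : x < 2*l) :
    (x % l = x ∧ x < l) ∨ (x % l = x - l ∧ l ≤ x) := by
  rcases Nat.lt_or_ge x l with h | h
  · exact Or.inl ⟨Nat.mod_eq_of_lt h, h⟩
  · refine Or.inr ⟨?_, h⟩
    rw [Nat.mod_eq_sub_mod h, Nat.mod_eq_of_lt (by omega)]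

/-- In a minimal cycle of copoints of length `l > 2`, the attachment points
are pairwise distinct. -/
theorem minCycle_attach_injective (G : ConvexGeom α) {l : ℕ} (hl : 2 < l)
    (A : Fin l → Finset α) (a : Fin l → α) (h : G.IsMinCycle A a) :
    ∀ i j : Fin l, i ≠ j → a i ≠ a j := by
  obtain ⟨⟨hinj, hatt, hcyc⟩, hmin⟩ := h
  suffices key : ∀ i j : Fin l, i.1 < j.1 → a i ≠ a j by
    intro i j hne heq
    rcases Nat.lt_or_ge i.1 j.1 with h' | h'
    · exact key i j h' heq
    · have h'' : j.1 < i.1 := lt_of_le_of_ne h' (fun hh => hne (Fin.ext hh.symm))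
      exact key j i h'' heq.symm
  intro i j hij heq
  have hjl : j.1 < l := j.2
  have hil : i.1 < l := i.2
  set m := l - (j.1 - i.1) with hm
  have hm0 : 0 < m := by omega
  have hml : m ≤ l := by omega
  have hl0 : 0 < l := by omega
  set f : Fin m → Fin l := fun k => ⟨(j.1 + 1 + k.1) % l, Nat.mod_lt _ hl0⟩ with hf
  have finj : Function.Injective f := by
    intro k₁ k₂ hkk
    have hv : (j.1 + 1 + k₁.1) % l = (j.1 + 1 + k₂.1) % l := congrArg Fin.val hkk
    have hk1 := k₁.2
    have hk2 := k₂.2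
    rcases two_l_mod l (j.1 + 1 + k₁.1) (by omega) with ⟨e1, b1⟩ | ⟨e1, b1⟩ <;>
      rcases two_l_mod l (j.1 + 1 + k₂.1) (by omega) with ⟨e2, b2⟩ | ⟨e2, b2⟩ <;>
      exact Fin.ext (by omega)
  refine hmin m (A ∘ f) (a ∘ f) hm0 ⟨hinj.comp finj, fun k => hatt (f k), ?_⟩ ?_
  · intro k
    simp only [Function.comp]
    by_cases hk : k.1 + 1 < m
    · have h1 : (k.1 + 1) % m = k.1 + 1 := Nat.mod_eq_of_lt hk
      have h2 : f ⟨(k.1 + 1) % m, Nat.mod_lt _ (Fin.pos k)⟩ =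
          ⟨((f k).1 + 1) % l, Nat.mod_lt _ (Fin.pos (f k))⟩ := by
        apply Fin.ext
        show (j.1 + 1 + ((k.1 + 1) % m)) % l = ((j.1 + 1 + k.1) % l + 1) % l
        rw [h1, Nat.mod_add_mod]
        congr 1
      rw [h2]
      exact hcyc (f k)
    · have hkm : k.1 + 1 = m := by have := k.2; omega
      have hfk : f k = i := by
        apply Fin.ext
        show (j.1 + 1 + k.1) % l = i.1
        rcases two_l_mod l (j.1 + 1 + k.1) (by omega) with ⟨e1, b1⟩ | ⟨e1, b1⟩ <;> omega
      have hfz : f ⟨(k.1 + 1) % m, Nat.mod_lt _ (Fin.pos k)⟩ =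
          ⟨(j.1 + 1) % l, Nat.mod_lt _ (Fin.pos j)⟩ := by
        apply Fin.ext
        show (j.1 + 1 + ((k.1 + 1) % m)) % l = (j.1 + 1) % l
        rw [hkm, Nat.mod_self]
      rw [hfk, hfz, heq]
      exact hcyc j
  · rw [Set.ssubset_def]
    constructor
    · rintro _ ⟨k, rfl⟩
      exact ⟨f k, rfl⟩
    · intro hsub
      obtain ⟨k, hk⟩ := hsub ⟨j, rfl⟩
      have hfk : f k = j := hinj hk
      have hv : (j.1 + 1 + k.1) % l = j.1 := congrArg Fin.val hfk
      have hkm := k.2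
      rcases two_l_mod l (j.1 + 1 + k.1) (by omega) with ⟨e1, b1⟩ | ⟨e1, b1⟩ <;> omega
end

section
/- Let (X,L) be a convex geometry and let (A_1, …, A_l) be a minimal cycle of copoints of length l > 2. Then α(A_i) ∈ A_j holds only when j = i + 1, or when i = l and j = 1 (indices taken cyclically). -/
variable {α : Type*} [DecidableEq α]

/-- In a minimal cycle of copoints of length `l > 2`, `α(A i) ∈ A j` holds
only for `j = i + 1` (indices taken cyclically). -/
theorem minCycle_attach_mem_only_succ (G : ConvexGeom α) {l : ℕ} (hl : 2 < l)
    (A : Fin l → Finset α) (a : Fin l → α) (h : G.IsMinCycle A a) :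
    ∀ i j : Fin l, a i ∈ A j → j = ⟨(i.1 + 1) % l, Nat.mod_lt _ i.pos⟩ := by
  intro i j ha
  by_contra hne
  haveI : NeZero l := ⟨by omega⟩
  obtain ⟨⟨hinj, hatt, hcyc⟩, hmin⟩ := h
  have h1l : ((1 : Fin l)).1 = 1 := by
    rw [Fin.val_one']; exact Nat.mod_eq_of_lt (by omega)
  have hsucc : ∀ p : Fin l, (⟨(p.1 + 1) % l, Nat.mod_lt _ p.pos⟩ : Fin l) = p + 1 := by
    intro p
    apply Fin.ext
    simp [Fin.val_add, h1l]
  have hcyc' : ∀ p : Fin l, a p ∈ A (p + 1) := by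
    intro p
    have := hcyc p
    rwa [hsucc p] at this
  have hne' : j ≠ i + 1 := fun hji => hne (hji.trans (hsucc i).symm)
  set d : Fin l := i - j with hd
  have hdlt : d.1 + 1 < l := by
    by_contra hge
    have hdl : d.1 + 1 = l := by have := d.isLt; omega
    have hd10 : d + 1 = 0 := by
      apply Fin.ext
      simp [Fin.val_add, h1l, hdl]
    have h2 : i + 1 = j := sub_eq_zero.mp (by rw [← sub_add_eq_add_sub]; exact hd10)
    exact hne' h2.symm
  set m : ℕ := d.1 + 1 with hm
  have hml : m ≤ l := hdlt.le
  set f : Fin m → Fin l := fun k => j + Fin.castLE hml k with hf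
  have finj : Function.Injective f := by
    intro x y hxy
    have h1 : Fin.castLE hml x = Fin.castLE hml y := add_left_cancel hxy
    exact Fin.castLE_injective hml h1
  have hBcyc : G.IsCycle (A ∘ f) (a ∘ f) := by
    refine ⟨hinj.comp finj, fun k => hatt (f k), ?_⟩
    intro k
    by_cases hk : k.1 + 1 < m
    · have h1 : (⟨(k.1 + 1) % m, Nat.mod_lt _ k.pos⟩ : Fin m) = ⟨k.1 + 1, hk⟩ :=
        Fin.ext (Nat.mod_eq_of_lt hk)
      have hc1 : Fin.castLE hml ⟨k.1 + 1, hk⟩ = Fin.castLE hml k + 1 := by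
        apply Fin.ext
        rw [Fin.val_add, Fin.coe_castLE, Fin.coe_castLE,
          h1l, Nat.mod_eq_of_lt (by omega)]
      have h2 : f ⟨k.1 + 1, hk⟩ = f k + 1 := by
        show j + Fin.castLE hml ⟨k.1 + 1, hk⟩ = (j + Fin.castLE hml k) + 1
        rw [hc1, add_assoc]
      show a (f k) ∈ A (f _)
      rw [h1, h2]
      exact hcyc' (f k)
    · have hk' : k.1 + 1 = m := by have := k.isLt; omega
      have h1 : (⟨(k.1 + 1) % m, Nat.mod_lt _ k.pos⟩ : Fin m) = ⟨0, k.pos⟩ := by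
        apply Fin.ext
        simp [hk']
      have hfk : f k = i := by
        have hcast : Fin.castLE hml k = d := Fin.ext (by simp; omega)
        rw [hf]
        simp only [hcast, hd]
        abel
      have hf0 : f ⟨0, k.pos⟩ = j := by
        have hc0 : Fin.castLE hml ⟨0, k.pos⟩ = 0 := Fin.ext (by simp)
        show j + Fin.castLE hml ⟨0, k.pos⟩ = j
        rw [hc0, add_zero]
      show a (f k) ∈ A (f _)
      rw [h1, hf0, hfk]
      exact ha
  have hsub : Set.range (A ∘ f) ⊂ Set.range A := by
    constructor
    · rintro _ ⟨k, rfl⟩; exact ⟨f k, rfl⟩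
    · intro hsup
      obtain ⟨k, hk⟩ := hsup ⟨i + 1, rfl⟩
      have hfk : f k = i + 1 := hinj hk
      have hcast : Fin.castLE hml k = d + 1 := by
        refine add_left_cancel (a := j) ?_
        show f k = j + (d + 1)
        rw [hfk, hd, ← add_assoc, add_comm j, sub_add_cancel]
      have hv := congrArg Fin.val hcast
      have hv1 : (d + 1 : Fin l).1 = d.1 + 1 := by
        rw [Fin.val_add, h1l, Nat.mod_eq_of_lt (by omega)]
      rw [hv1] at hv
      simp at hv
      have := k.isLt
      omega
  exact hmin m (A ∘ f) (a ∘ f) (Nat.succ_pos d.1) hBcyc hsub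
end

section
/- For every positive integer k and every realization of the extended Erdős–Szekeres point set XES(k), the order dimension of the lattice of closed sets of the realizable convex geometry on XES(k) equals k + 1. -/
/-- `A` is a closed set of the realizable convex geometry on the finite planar point set
`P`, whose closure operator is `L(A) = conv(A) ∩ P`: that is, `A ⊆ P` and
`conv(A) ∩ P ⊆ A`. -/
def RClosed (P A : Finset (ℝ × ℝ)) : Prop :=
  A ⊆ P ∧ ∀ x ∈ P, x ∈ convexHull ℝ (A : Set (ℝ × ℝ)) → x ∈ A

/-- `A` is a copoint of the realizable convex geometry on `P`: a closed set such that
there is exactly one closed set `B` with `|B \ A| = 1`. -/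
def RCopoint (P A : Finset (ℝ × ℝ)) : Prop :=
  RClosed P A ∧ ∃! B, RClosed P B ∧ (B \ A).card = 1

/-- The copoint `A` is attached to the point `p` (i.e. `p = α(A)`). -/
def RAttached (P A : Finset (ℝ × ℝ)) (p : ℝ × ℝ) : Prop :=
  RCopoint P A ∧ ∃ B, RClosed P B ∧ B \ A = {p}

/-- A cycle of copoints `(A 0, …, A (l-1))` with attachment points `a i = α(A i)`:
the copoints are pairwise distinct and `α(A i) ∈ A (i+1)` cyclically. -/
def RCycle (P : Finset (ℝ × ℝ)) {l : ℕ} (A : Fin l → Finset (ℝ × ℝ))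
    (a : Fin l → ℝ × ℝ) : Prop :=
  Function.Injective A ∧ (∀ i, RAttached P (A i) (a i)) ∧
  ∀ i : Fin l, a i ∈ A ⟨(i.1 + 1) % l, Nat.mod_lt _ i.pos⟩

/-- A minimal cycle of copoints: no nonempty proper subfamily of its copoints can be
arranged into a cycle of copoints. -/
def RMinCycle (P : Finset (ℝ × ℝ)) {l : ℕ} (A : Fin l → Finset (ℝ × ℝ))
    (a : Fin l → ℝ × ℝ) : Prop :=
  RCycle P A a ∧ ∀ (m : ℕ) (B : Fin m → Finset (ℝ × ℝ)) (b : Fin m → ℝ × ℝ),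
    0 < m → RCycle P B b → ¬ Set.range B ⊂ Set.range A

/-- A planar point set is in general position if no three of its points are collinear. -/
def GenPos (P : Finset (ℝ × ℝ)) : Prop :=
  ∀ a ∈ P, ∀ b ∈ P, ∀ c ∈ P, a ≠ b → a ≠ c → b ≠ c →
    ¬ Collinear ℝ ({a, b, c} : Set (ℝ × ℝ))

/-- Every line through two points of `S` has (finite) slope strictly smaller than the slope
of the line through `l` and `m` (pairs are ordered by first coordinate; the inequality is
stated in cross-multiplied form, valid since `l.1 < m.1` in a composition). -/
def SlopeLT (S : Finset (ℝ × ℝ)) (l m : ℝ × ℝ) : Prop :=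
  ∀ a ∈ S, ∀ b ∈ S, a.1 < b.1 → (b.2 - a.2) * (m.1 - l.1) < (m.2 - l.2) * (b.1 - a.1)

/-- `P` is a composition of `L` and `M` (where `M` is identified with its translate):
`P = L ∪ M`, every point of `M` has greater first coordinate than every point of `L`, all
lines through two points of `L` or through two points of `M` are non-vertical, and the
slope of any line from `L` to `M` exceeds the slope of any line within `L` or within `M`. -/
def CompOf (P L M : Finset (ℝ × ℝ)) : Prop :=
  P = L ∪ M ∧
  (∀ a ∈ L, ∀ b ∈ L, a ≠ b → a.1 ≠ b.1) ∧
  (∀ a ∈ M, ∀ b ∈ M, a ≠ b → a.1 ≠ b.1) ∧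
  (∀ l ∈ L, ∀ m ∈ M, l.1 < m.1) ∧
  (∀ l ∈ L, ∀ m ∈ M, SlopeLT L l m ∧ SlopeLT M l m)

/-- `P` is a composition of the point sets in the list `Ls`, via iterated binary
compositions whose leaves, read left to right, are the members of `Ls`. -/
inductive CompOfList : Finset (ℝ × ℝ) → List (Finset (ℝ × ℝ)) → Prop
  | single (L : Finset (ℝ × ℝ)) : CompOfList L [L]
  | comp {P Q R : Finset (ℝ × ℝ)} {ls ms : List (Finset (ℝ × ℝ))} :
      CompOfList Q ls → CompOfList R ms → CompOf P Q R → CompOfList P (ls ++ ms)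

/-- `P` is (a realization of) the Erdős–Szekeres point set `ES(i, j)`: `ES(0, k)` and
`ES(k, 0)` are singletons, and for `i, j ≥ 1`, `ES(i, j)` is a composition of
`ES(i-1, j)` and `ES(i, j-1)`. -/
inductive IsES : ℕ → ℕ → Finset (ℝ × ℝ) → Prop
  | base_left (k : ℕ) (p : ℝ × ℝ) : IsES 0 k {p}
  | base_right (k : ℕ) (p : ℝ × ℝ) : IsES k 0 {p}
  | step {i j : ℕ} {P Q R : Finset (ℝ × ℝ)} :
      IsES i (j + 1) Q → IsES (i + 1) j R → CompOf P Q R → IsES (i + 1) (j + 1) P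

/-- `P` is (a realization of) the extended Erdős–Szekeres point set `XES(k)`: the
composition, performed in order from left to right, of `ES(0,k), ES(1,k-1), …, ES(k,0)`. -/
def IsXES (k : ℕ) (P : Finset (ℝ × ℝ)) : Prop :=
  ∃ E Q : ℕ → Finset (ℝ × ℝ),
    (∀ i ≤ k, IsES i (k - i) (E i)) ∧
    Q 0 = E 0 ∧ (∀ i < k, CompOf (Q (i + 1)) (Q i) (E (i + 1))) ∧ P = Q k

/-- The lattice of closed sets of the realizable convex geometry on `P` has a realizer of
size `t`: `t` linear extensions of the inclusion order on closed sets whose intersection is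
the inclusion order. -/
def RHasRealizer (P : Finset (ℝ × ℝ)) (t : ℕ) : Prop :=
  ∃ r : Fin t → ({A : Finset (ℝ × ℝ) // RClosed P A} →
      {A : Finset (ℝ × ℝ) // RClosed P A} → Prop),
    (∀ i, IsLinearOrder _ (r i)) ∧
    (∀ i A B, A.1 ⊆ B.1 → r i A B) ∧
    (∀ A B, (∀ i, r i A B) → A.1 ⊆ B.1)



noncomputable section
namespace XesProof

abbrev Pt := ℝ × ℝ

/-- index of `p` in `ω` (length if absent). -/
def idx : List Pt → Pt → ℕ
  | [], _ => 0
  | a :: l, p => if a = p then 0 else idx l p + 1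

theorem idx_lt_length {ω : List Pt} {p : Pt} (hp : p ∈ ω) : idx ω p < ω.length := by
  induction ω with
  | nil => simp at hp
  | cons a l ih =>
    by_cases h : a = p
    · simp [idx, h]
    · rcases List.mem_cons.1 hp with h' | h'
      · exact absurd h'.symm h
      · simpa [idx, h] using ih h'

theorem idx_append_left {ω₁ ω₂ : List Pt} {p : Pt} (hp : p ∈ ω₁) :
    idx (ω₁ ++ ω₂) p = idx ω₁ p := by
  induction ω₁ with
  | nil => simp at hp
  | cons a l ih =>
    by_cases h : a = p
    · simp [idx, h]
    · rcases List.mem_cons.1 hp with h' | h'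
      · exact absurd h'.symm h
      · simp [idx, h, ih h']

theorem idx_append_right {ω₁ ω₂ : List Pt} {p : Pt} (hp : p ∉ ω₁) :
    idx (ω₁ ++ ω₂) p = ω₁.length + idx ω₂ p := by
  induction ω₁ with
  | nil => simp
  | cons a l ih =>
    have h : a ≠ p := fun h => hp (h ▸ List.mem_cons_self (a := a) (l := l))
    have h' : p ∉ l := fun h' => hp (List.mem_cons_of_mem _ h')
    simp [idx, h, ih h']
    omega

theorem idx_inj {ω : List Pt} (hω : ω.Nodup) {p q : Pt} (hp : p ∈ ω) (hq : q ∈ ω)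
    (h : idx ω p = idx ω q) : p = q := by
  induction ω with
  | nil => simp at hp
  | cons a l ih =>
    rcases List.nodup_cons.1 hω with ⟨ha, hl⟩
    by_cases h1 : a = p <;> by_cases h2 : a = q
    · exact h1 ▸ h2
    · rcases List.mem_cons.1 hq with h' | h'
      · exact absurd h'.symm h2
      · by_cases hpq : p = q
        · exact hpq
        · simp [idx, h1, h2, hpq] at h
    · rcases List.mem_cons.1 hp with h' | h'
      · exact absurd h'.symm h1
      · by_cases hpq : p = q
        · exact hpq
        · simp [idx, h1, h2, hpq] at h
          exact absurd h.symm hpq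
    · rcases List.mem_cons.1 hp with h' | h'
      · exact absurd h'.symm h1
      rcases List.mem_cons.1 hq with h'' | h''
      · exact absurd h''.symm h2
      · simp only [idx, if_neg h1, if_neg h2, Nat.add_right_cancel_iff] at h
        exact ih hl h' h'' h

/-- `p` is strictly earlier than `x` in list `ω`. -/
def LOrd (ω : List Pt) (p x : Pt) : Prop := idx ω p < idx ω x

theorem lord_left_right {ω₁ ω₂ : List Pt} {p x : Pt} (hp : p ∈ ω₁) (hx : x ∉ ω₁) :
    LOrd (ω₁ ++ ω₂) p x := by
  unfold LOrd
  rw [idx_append_left hp, idx_append_right hx]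
  calc idx ω₁ p < ω₁.length := idx_lt_length hp
  _ ≤ ω₁.length + idx ω₂ x := Nat.le_add_right _ _

theorem lord_of_left {ω₁ ω₂ : List Pt} {p x : Pt} (hp : p ∈ ω₁) (hx : x ∈ ω₁)
    (h : LOrd ω₁ p x) : LOrd (ω₁ ++ ω₂) p x := by
  unfold LOrd; rwa [idx_append_left hp, idx_append_left hx]

theorem lord_of_right {ω₁ ω₂ : List Pt} {p x : Pt} (hp : p ∉ ω₁) (hx : x ∉ ω₁)
    (h : LOrd ω₂ p x) : LOrd (ω₁ ++ ω₂) p x := by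
  unfold LOrd at h ⊢
  rw [idx_append_right hp, idx_append_right hx]; omega

/-- `p` is strictly below the line of slope `σ` through `x`. -/
def Belo (σ : ℝ) (x p : Pt) : Prop := p.2 - x.2 < σ * (p.1 - x.1)

/-- `p` is strictly above the line of slope `σ` through `x`. -/
def Abov (σ : ℝ) (x p : Pt) : Prop := σ * (p.1 - x.1) < p.2 - x.2

theorem belo_irrefl (σ : ℝ) (x : Pt) : ¬ Belo σ x x := by simp [Belo]
theorem abov_irrefl (σ : ℝ) (x : Pt) : ¬ Abov σ x x := by simp [Abov]

end XesProof

-- continuation: assumes w1 content + original defs present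
namespace XesProof

theorem perm_append {ω₁ ω₂ : List Pt} {F₁ F₂ : Finset Pt}
    (h₁ : ω₁.Nodup) (e₁ : ω₁.toFinset = F₁) (h₂ : ω₂.Nodup) (e₂ : ω₂.toFinset = F₂)
    (hd : ∀ a ∈ F₁, a ∉ F₂) :
    (ω₁ ++ ω₂).Nodup ∧ (ω₁ ++ ω₂).toFinset = F₁ ∪ F₂ := by
  constructor
  · refine List.Nodup.append h₁ h₂ ?_
    intro a ha₁ ha₂
    exact hd a (e₁ ▸ List.mem_toFinset.2 ha₁) (e₂ ▸ List.mem_toFinset.2 ha₂)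
  · rw [List.toFinset_append, e₁, e₂]

theorem mem_of_perm {ω : List Pt} {F : Finset Pt} (e : ω.toFinset = F) {p : Pt}
    (hp : p ∈ F) : p ∈ ω := List.mem_toFinset.1 (e ▸ hp)

theorem not_mem_of_perm {ω : List Pt} {F : Finset Pt} (e : ω.toFinset = F) {p : Pt}
    (hp : p ∉ F) : p ∉ ω := fun h => hp (e ▸ List.mem_toFinset.2 h)

section CompFacts

variable {P L M : Finset Pt}

theorem comp_lt (hc : CompOf P L M) : ∀ l ∈ L, ∀ m ∈ M, l.1 < m.1 := hc.2.2.2.1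

theorem comp_not_memL (hc : CompOf P L M) : ∀ a ∈ M, a ∉ L := by
  intro a haM haL
  exact lt_irrefl a.1 (hc.2.2.2.1 a haL a haM)

theorem comp_not_memM (hc : CompOf P L M) : ∀ a ∈ L, a ∉ M := by
  intro a haL haM
  exact lt_irrefl a.1 (hc.2.2.2.1 a haL a haM)

theorem comp_mem_cases (hc : CompOf P L M) {x : Pt} (hx : x ∈ P) : x ∈ L ∨ x ∈ M := by
  have := hc.1 ▸ hx
  exact Finset.mem_union.1 this

/-- K1: if some point of `M` is below the `σ`-line at `x ∈ L`, then no point of `L`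
left of `x` is below that line. -/
theorem comp_K1 (hc : CompOf P L M) {σ : ℝ} {x p p₀ : Pt} (hx : x ∈ L) (hp : p ∈ L) (hp₀ : p₀ ∈ M)
    (hb₀ : Belo σ x p₀) (hpx : p.1 < x.1) : ¬ Belo σ x p := by
  intro hb
  have hs := (hc.2.2.2.2 x hx p₀ hp₀).1 p hp x hx hpx
  have h1 : x.1 < p₀.1 := hc.2.2.2.1 x hx p₀ hp₀
  unfold Belo at hb hb₀
  nlinarith [mul_pos (sub_pos.2 h1) (sub_pos.2 hpx)]

/-- K2: if some point of `L` is above the `σ`-line at `x ∈ M`, then no point of `M`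
right of `x` is above that line. -/
theorem comp_K2 (hc : CompOf P L M) {σ : ℝ} {x p p₀ : Pt} (hx : x ∈ M) (hp : p ∈ M) (hp₀ : p₀ ∈ L)
    (ha₀ : Abov σ x p₀) (hxp : x.1 < p.1) : ¬ Abov σ x p := by
  intro ha
  have hs := (hc.2.2.2.2 p₀ hp₀ x hx).2 x hx p hp hxp
  have h1 : p₀.1 < x.1 := hc.2.2.2.1 p₀ hp₀ x hx
  unfold Abov at ha ha₀
  nlinarith [mul_pos (sub_pos.2 h1) (sub_pos.2 hxp)]

end CompFacts

/-- The main inductive lemma on ES-trees: families of linear orders realizing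
above- and below-domination. -/
theorem lemES {i j : ℕ} {S : Finset Pt} (h : IsES i j S) :
    ∃ A B : ℕ → List Pt,
      (∀ t, (A t).Nodup ∧ (A t).toFinset = S) ∧
      (∀ t, (B t).Nodup ∧ (B t).toFinset = S) ∧
      A 0 = B 0 ∧ A i = B j ∧
      (∀ x ∈ S, ∀ p ∈ S, x.1 < p.1 → LOrd (A 0) p x) ∧
      (∀ x ∈ S, ∀ p ∈ S, p.1 < x.1 → LOrd (A i) p x) ∧
      (∀ x ∈ S, ∀ σ : ℝ, ∃ t ≤ i, ∀ p ∈ S, Abov σ x p → LOrd (A t) p x) ∧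
      (∀ x ∈ S, ∀ σ : ℝ, ∃ t ≤ j, ∀ p ∈ S, Belo σ x p → LOrd (B t) p x) := by
  induction h with
  | base_left k p =>
    refine ⟨fun _ => [p], fun _ => [p], by simp, by simp, rfl, rfl, ?_, ?_, ?_, ?_⟩
    · intro x hx q hq hlt
      simp only [Finset.mem_singleton] at hx hq
      rw [hx, hq] at hlt; exact absurd hlt (lt_irrefl _)
    · intro x hx q hq hlt
      simp only [Finset.mem_singleton] at hx hq
      rw [hx, hq] at hlt; exact absurd hlt (lt_irrefl _)
    · intro x hx σ
      refine ⟨0, Nat.zero_le _, ?_⟩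
      intro q hq ha
      simp only [Finset.mem_singleton] at hx hq
      rw [hx, hq] at ha ⊢
      exact absurd ha (abov_irrefl σ p)
    · intro x hx σ
      refine ⟨0, Nat.zero_le _, ?_⟩
      intro q hq hb
      simp only [Finset.mem_singleton] at hx hq
      rw [hx, hq] at hb ⊢
      exact absurd hb (belo_irrefl σ p)
  | base_right k p =>
    refine ⟨fun _ => [p], fun _ => [p], by simp, by simp, rfl, rfl, ?_, ?_, ?_, ?_⟩
    · intro x hx q hq hlt
      simp only [Finset.mem_singleton] at hx hq
      rw [hx, hq] at hlt; exact absurd hlt (lt_irrefl _)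
    · intro x hx q hq hlt
      simp only [Finset.mem_singleton] at hx hq
      rw [hx, hq] at hlt; exact absurd hlt (lt_irrefl _)
    · intro x hx σ
      refine ⟨0, Nat.zero_le _, ?_⟩
      intro q hq ha
      simp only [Finset.mem_singleton] at hx hq
      rw [hx, hq] at ha ⊢
      exact absurd ha (abov_irrefl σ p)
    · intro x hx σ
      refine ⟨0, Nat.zero_le _, ?_⟩
      intro q hq hb
      simp only [Finset.mem_singleton] at hx hq
      rw [hx, hq] at hb ⊢
      exact absurd hb (belo_irrefl σ p)
  | @step i j S L M hL hM hc ihL ihM =>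
    obtain ⟨AL, BL, pAL, pBL, eL0, eLlast, p0L, plastL, paL, pbL⟩ := ihL
    obtain ⟨AM, BM, pAM, pBM, eM0, eMlast, p0M, plastM, paM, pbM⟩ := ihM
    -- S = L ∪ M
    have hmemL : ∀ {x : Pt}, x ∈ L → x ∈ S := by
      intro x hx; rw [hc.1]; exact Finset.mem_union_left _ hx
    have hmemM : ∀ {x : Pt}, x ∈ M → x ∈ S := by
      intro x hx; rw [hc.1]; exact Finset.mem_union_right _ hx
    have hML : ∀ a ∈ M, a ∉ L := comp_not_memL hc
    have hLM : ∀ a ∈ L, a ∉ M := comp_not_memM hc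
    set A : ℕ → List Pt := fun t => if t ≤ i then AM t ++ AL t else AL i ++ AM (i+1)
      with hA
    set B : ℕ → List Pt := fun t => if t = 0 then BM 0 ++ BL 0 else BL t ++ BM (t-1)
      with hB
    have permA : ∀ t, (A t).Nodup ∧ (A t).toFinset = S := by
      intro t
      by_cases ht : t ≤ i <;> simp only [hA, ht, if_pos, if_neg, if_true, if_false]
      · obtain ⟨n, e⟩ := perm_append (pAM t).1 (pAM t).2 (pAL t).1 (pAL t).2 hML
        exact ⟨n, by rw [e, Finset.union_comm, ← hc.1]⟩
      · obtain ⟨n, e⟩ := perm_append (pAL i).1 (pAL i).2 (pAM (i+1)).1 (pAM (i+1)).2 hLM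
        exact ⟨n, by rw [e, ← hc.1]⟩
    have permB : ∀ t, (B t).Nodup ∧ (B t).toFinset = S := by
      intro t
      by_cases ht : t = 0 <;> simp only [hB, ht, if_pos, if_neg, if_true, if_false]
      · obtain ⟨n, e⟩ := perm_append (pBM 0).1 (pBM 0).2 (pBL 0).1 (pBL 0).2 hML
        exact ⟨n, by rw [e, Finset.union_comm, ← hc.1]⟩
      · obtain ⟨n, e⟩ := perm_append (pBL t).1 (pBL t).2 (pBM (t-1)).1 (pBM (t-1)).2 hLM
        exact ⟨n, by rw [e, ← hc.1]⟩
    refine ⟨A, B, permA, permB, ?_, ?_, ?_, ?_, ?_, ?_⟩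
    · -- A 0 = B 0
      simp only [hA, hB, Nat.zero_le, if_pos, if_true, eq_self_iff_true]
      rw [eM0, eL0]
    · -- A (i+1) = B (j+1)
      have h1 : ¬ (i+1 ≤ i) := by omega
      have h2 : ¬ (j+1 = 0) := by omega
      simp only [hA, hB, h1, h2, if_neg, if_false]
      rw [eLlast, eMlast]
      norm_num
    · -- P0 for A 0
      intro x hx p hp hlt
      have e0 : A 0 = AM 0 ++ AL 0 := by simp [hA]
      rw [e0]
      rcases comp_mem_cases hc hx with hxL | hxM <;> rcases comp_mem_cases hc hp with hpL | hpM
      · exact lord_of_right (not_mem_of_perm (pAM 0).2 (hLM p hpL))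
          (not_mem_of_perm (pAM 0).2 (hLM x hxL)) (p0L x hxL p hpL hlt)
      · exact lord_left_right (mem_of_perm (pAM 0).2 hpM)
          (not_mem_of_perm (pAM 0).2 (hLM x hxL))
      · exact absurd (comp_lt hc p hpL x hxM) (by linarith)
      · exact lord_of_left (mem_of_perm (pAM 0).2 hpM) (mem_of_perm (pAM 0).2 hxM)
          (p0M x hxM p hpM hlt)
    · -- Plast for A (i+1)
      intro x hx p hp hlt
      have h1 : ¬ (i+1 ≤ i) := by omega
      have e1 : A (i+1) = AL i ++ AM (i+1) := by simp [hA, h1]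
      rw [e1]
      rcases comp_mem_cases hc hx with hxL | hxM <;> rcases comp_mem_cases hc hp with hpL | hpM
      · exact lord_of_left (mem_of_perm (pAL i).2 hpL) (mem_of_perm (pAL i).2 hxL)
          (plastL x hxL p hpL hlt)
      · exact absurd (comp_lt hc x hxL p hpM) (by linarith)
      · exact lord_left_right (mem_of_perm (pAL i).2 hpL)
          (not_mem_of_perm (pAL i).2 (hML x hxM))
      · exact lord_of_right (not_mem_of_perm (pAL i).2 (hML p hpM))
          (not_mem_of_perm (pAL i).2 (hML x hxM)) (plastM x hxM p hpM hlt)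
    · -- PA
      intro x hx σ
      rcases comp_mem_cases hc hx with hxL | hxM
      · obtain ⟨t, ht, hdom⟩ := paL x hxL σ
        refine ⟨t, by omega, ?_⟩
        have e : A t = AM t ++ AL t := by simp [hA, ht]
        rw [e]
        intro p hp ha
        rcases comp_mem_cases hc hp with hpL | hpM
        · exact lord_of_right (not_mem_of_perm (pAM t).2 (hLM p hpL))
            (not_mem_of_perm (pAM t).2 (hLM x hxL)) (hdom p hpL ha)
        · exact lord_left_right (mem_of_perm (pAM t).2 hpM)
            (not_mem_of_perm (pAM t).2 (hLM x hxL))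
      · by_cases hex : ∃ p₀ ∈ L, Abov σ x p₀
        · obtain ⟨p₀, hp₀, ha₀⟩ := hex
          refine ⟨i+1, le_refl _, ?_⟩
          have h1 : ¬ (i+1 ≤ i) := by omega
          have e1 : A (i+1) = AL i ++ AM (i+1) := by simp [hA, h1]
          rw [e1]
          intro p hp ha
          rcases comp_mem_cases hc hp with hpL | hpM
          · exact lord_left_right (mem_of_perm (pAL i).2 hpL)
              (not_mem_of_perm (pAL i).2 (hML x hxM))
          · have hne : p ≠ x := by rintro rfl; exact abov_irrefl _ _ ha
            have hplt : p.1 < x.1 := by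
              rcases lt_trichotomy p.1 x.1 with h | h | h
              · exact h
              · exact absurd h (hc.2.2.1 p hpM x hxM hne)
              · exact absurd ha (comp_K2 hc hxM hpM hp₀ ha₀ h)
            exact lord_of_right (not_mem_of_perm (pAL i).2 (hML p hpM))
              (not_mem_of_perm (pAL i).2 (hML x hxM)) (plastM x hxM p hpM hplt)
        · push_neg at hex
          obtain ⟨t, ht, hdom⟩ := paM x hxM σ
          by_cases hti : t ≤ i
          · refine ⟨t, by omega, ?_⟩
            have e : A t = AM t ++ AL t := by simp [hA, hti]
            rw [e]
            intro p hp ha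
            rcases comp_mem_cases hc hp with hpL | hpM
            · exact absurd ha (hex p hpL)
            · exact lord_of_left (mem_of_perm (pAM t).2 hpM) (mem_of_perm (pAM t).2 hxM)
                (hdom p hpM ha)
          · have hti' : t = i+1 := by omega
            refine ⟨i+1, le_refl _, ?_⟩
            have h1 : ¬ (i+1 ≤ i) := by omega
            have e1 : A (i+1) = AL i ++ AM (i+1) := by simp [hA, h1]
            rw [e1]
            intro p hp ha
            rcases comp_mem_cases hc hp with hpL | hpM
            · exact absurd ha (hex p hpL)
            · exact lord_of_right (not_mem_of_perm (pAL i).2 (hML p hpM))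
                (not_mem_of_perm (pAL i).2 (hML x hxM)) (hti' ▸ hdom p hpM ha)
    · -- PB
      intro x hx σ
      rcases comp_mem_cases hc hx with hxL | hxM
      · by_cases hex : ∃ p₀ ∈ M, Belo σ x p₀
        · obtain ⟨p₀, hp₀, hb₀⟩ := hex
          refine ⟨0, Nat.zero_le _, ?_⟩
          have e0 : B 0 = BM 0 ++ BL 0 := by simp [hB]
          rw [e0]
          intro p hp hb
          rcases comp_mem_cases hc hp with hpL | hpM
          · have hne : p ≠ x := by rintro rfl; exact belo_irrefl _ _ hb
            have hxlt : x.1 < p.1 := by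
              rcases lt_trichotomy p.1 x.1 with h | h | h
              · exact absurd hb (comp_K1 hc hxL hpL hp₀ hb₀ h)
              · exact absurd h (hc.2.1 p hpL x hxL hne)
              · exact h
            have : LOrd (AL 0) p x := p0L x hxL p hpL hxlt
            rw [eL0] at this
            exact lord_of_right (not_mem_of_perm (pBM 0).2 (hLM p hpL))
              (not_mem_of_perm (pBM 0).2 (hLM x hxL)) this
          · exact lord_left_right (mem_of_perm (pBM 0).2 hpM)
              (not_mem_of_perm (pBM 0).2 (hLM x hxL))
        · push_neg at hex
          obtain ⟨t, ht, hdom⟩ := pbL x hxL σ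
          by_cases ht0 : t = 0
          · refine ⟨0, Nat.zero_le _, ?_⟩
            have e0 : B 0 = BM 0 ++ BL 0 := by simp [hB]
            rw [e0]
            intro p hp hb
            rcases comp_mem_cases hc hp with hpL | hpM
            · exact lord_of_right (not_mem_of_perm (pBM 0).2 (hLM p hpL))
                (not_mem_of_perm (pBM 0).2 (hLM x hxL)) (ht0 ▸ hdom p hpL hb)
            · exact absurd hb (hex p hpM)
          · refine ⟨t, by omega, ?_⟩
            have e : B t = BL t ++ BM (t-1) := by simp [hB, ht0]
            rw [e]
            intro p hp hb
            rcases comp_mem_cases hc hp with hpL | hpM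
            · exact lord_of_left (mem_of_perm (pBL t).2 hpL) (mem_of_perm (pBL t).2 hxL)
                (hdom p hpL hb)
            · exact absurd hb (hex p hpM)
      · obtain ⟨t, ht, hdom⟩ := pbM x hxM σ
        refine ⟨t+1, by omega, ?_⟩
        have h2 : ¬ (t+1 = 0) := by omega
        have e : B (t+1) = BL (t+1) ++ BM t := by simp [hB, h2]
        rw [e]
        intro p hp hb
        rcases comp_mem_cases hc hp with hpL | hpM
        · exact lord_left_right (mem_of_perm (pBL (t+1)).2 hpL)
            (not_mem_of_perm (pBL (t+1)).2 (hML x hxM))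
        · exact lord_of_right (not_mem_of_perm (pBL (t+1)).2 (hML p hpM))
            (not_mem_of_perm (pBL (t+1)).2 (hML x hxM)) (hdom p hpM hb)

end XesProof

namespace XesProof

theorem chainLem {k : ℕ} (E Q : ℕ → Finset Pt)
    (hE : ∀ i ≤ k, IsES i (k - i) (E i))
    (hQ0 : Q 0 = E 0)
    (hcomp : ∀ i < k, CompOf (Q (i + 1)) (Q i) (E (i + 1))) :
    ∀ c, c ≤ k → ∃ R : ℕ → List Pt,
      (∀ b, (R b).Nodup ∧ (R b).toFinset = Q c) ∧
      (∀ x ∈ Q c, ∀ p ∈ Q c, x.1 < p.1 → LOrd (R 0) p x) ∧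
      (∀ x ∈ Q c, ∃ b ≤ c, ∀ p ∈ Q c, p.1 < x.1 → LOrd (R b) p x) ∧
      (∀ x ∈ Q c, ∀ σ : ℝ, ∃ b ≤ k, ∀ p ∈ Q c, Belo σ x p → LOrd (R b) p x) ∧
      (∀ x ∈ Q c, ∀ σ : ℝ, ∃ b ≤ c, ∀ p ∈ Q c, Abov σ x p → LOrd (R b) p x) := by
  intro c
  induction c with
  | zero =>
    intro _
    obtain ⟨A, B, pA, pB, e0, elast, p0, plast, pa, pb⟩ := lemES (hE 0 (Nat.zero_le _))
    rw [Nat.sub_zero] at *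
    refine ⟨B, ?_, ?_, ?_, ?_, ?_⟩
    · intro b; rw [hQ0]; exact pB b
    · intro x hx p hp hlt
      rw [hQ0] at hx hp
      have := p0 x hx p hp hlt
      rwa [e0] at this
    · intro x hx
      rw [hQ0] at hx
      refine ⟨0, le_refl _, ?_⟩
      intro p hp hlt
      rw [hQ0] at hp
      have := plast x hx p hp hlt
      rwa [e0] at this
    · intro x hx σ
      rw [hQ0] at hx
      obtain ⟨t, ht, hdom⟩ := pb x hx σ
      exact ⟨t, ht, fun p hp hb => hdom p (hQ0 ▸ hp) hb⟩
    · intro x hx σ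
      rw [hQ0] at hx
      obtain ⟨t, ht, hdom⟩ := pa x hx σ
      refine ⟨0, le_refl _, ?_⟩
      intro p hp ha
      have ht0 : t = 0 := by omega
      have := hdom p (hQ0 ▸ hp) ha
      rw [ht0, e0] at this
      exact this
  | succ c ih =>
    intro hck
    obtain ⟨R', permR, c0, c3, cl1, cl2⟩ := ih (by omega)
    obtain ⟨A, B, pA, pB, e0, elast, p0, plast, pa, pb⟩ := lemES (hE (c + 1) hck)
    have hc := hcomp c (by omega)
    set Qc := Q c
    set Ec := E (c + 1)
    set S := Q (c + 1)
    have hmemL : ∀ {x : Pt}, x ∈ Qc → x ∈ S := by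
      intro x hx; rw [hc.1]; exact Finset.mem_union_left _ hx
    have hmemM : ∀ {x : Pt}, x ∈ Ec → x ∈ S := by
      intro x hx; rw [hc.1]; exact Finset.mem_union_right _ hx
    have hML : ∀ a ∈ Ec, a ∉ Qc := comp_not_memL hc
    have hLM : ∀ a ∈ Qc, a ∉ Ec := comp_not_memM hc
    set part : ℕ → List Pt := fun b => if b ≤ c + 1 then A b else B (k - b) with hpart
    have partperm : ∀ b, (part b).Nodup ∧ (part b).toFinset = Ec := by
      intro b
      by_cases hb : b ≤ c + 1
      · have e : part b = A b := by simp [hpart, hb]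
        rw [e]; exact pA b
      · have e : part b = B (k - b) := by simp [hpart, hb]
        rw [e]; exact pB _
    set R : ℕ → List Pt := fun b => if b ≤ c then part b ++ R' b else R' b ++ part b
      with hR
    have permS : ∀ b, (R b).Nodup ∧ (R b).toFinset = S := by
      intro b
      by_cases hb : b ≤ c
      · have e : R b = part b ++ R' b := by simp [hR, hb]
        rw [e]
        obtain ⟨n, efin⟩ := perm_append (partperm b).1 (partperm b).2 (permR b).1 (permR b).2 hML
        exact ⟨n, by rw [efin, Finset.union_comm, ← hc.1]⟩
      · have e : R b = R' b ++ part b := by simp [hR, hb]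
        rw [e]
        obtain ⟨n, efin⟩ := perm_append (permR b).1 (permR b).2 (partperm b).1 (partperm b).2 hLM
        exact ⟨n, by rw [efin, ← hc.1]⟩
    have epart0 : part 0 = A 0 := by simp [hpart]
    have epartlast : part (c + 1) = A (c + 1) := by simp [hpart]
    refine ⟨R, permS, ?_, ?_, ?_, ?_⟩
    · -- C0
      intro x hx p hp hlt
      have e : R 0 = part 0 ++ R' 0 := by simp [hR]
      rw [e, epart0]
      rcases comp_mem_cases hc hx with hxL | hxM <;> rcases comp_mem_cases hc hp with hpL | hpM
      · exact lord_of_right (not_mem_of_perm (pA 0).2 (hLM p hpL))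
          (not_mem_of_perm (pA 0).2 (hLM x hxL)) (c0 x hxL p hpL hlt)
      · exact lord_left_right (mem_of_perm (pA 0).2 hpM)
          (not_mem_of_perm (pA 0).2 (hLM x hxL))
      · exact absurd (comp_lt hc p hpL x hxM) (by linarith)
      · exact lord_of_left (mem_of_perm (pA 0).2 hpM) (mem_of_perm (pA 0).2 hxM)
          (p0 x hxM p hpM hlt)
    · -- C3
      intro x hx
      rcases comp_mem_cases hc hx with hxL | hxM
      · obtain ⟨b, hb, hdom⟩ := c3 x hxL
        refine ⟨b, by omega, ?_⟩
        have e : R b = part b ++ R' b := by simp [hR, hb]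
        rw [e]
        intro p hp hlt
        rcases comp_mem_cases hc hp with hpL | hpM
        · exact lord_of_right (not_mem_of_perm (partperm b).2 (hLM p hpL))
            (not_mem_of_perm (partperm b).2 (hLM x hxL)) (hdom p hpL hlt)
        · exact absurd (comp_lt hc x hxL p hpM) (by linarith)
      · refine ⟨c + 1, le_refl _, ?_⟩
        have hnb : ¬ (c + 1 ≤ c) := by omega
        have e : R (c + 1) = R' (c + 1) ++ part (c + 1) := by simp [hR, hnb]
        rw [e, epartlast]
        intro p hp hlt
        rcases comp_mem_cases hc hp with hpL | hpM
        · exact lord_left_right (mem_of_perm (permR (c + 1)).2 hpL)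
            (not_mem_of_perm (permR (c + 1)).2 (hML x hxM))
        · exact lord_of_right (not_mem_of_perm (permR (c + 1)).2 (hML p hpM))
            (not_mem_of_perm (permR (c + 1)).2 (hML x hxM)) (plast x hxM p hpM hlt)
    · -- CL1
      intro x hx σ
      rcases comp_mem_cases hc hx with hxL | hxM
      · by_cases hex : ∃ p₀ ∈ Ec, Belo σ x p₀
        · obtain ⟨p₀, hp₀, hb₀⟩ := hex
          refine ⟨0, Nat.zero_le _, ?_⟩
          have e : R 0 = part 0 ++ R' 0 := by simp [hR]
          rw [e]
          intro p hp hb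
          rcases comp_mem_cases hc hp with hpL | hpM
          · have hne : p ≠ x := by rintro rfl; exact belo_irrefl _ _ hb
            have hxlt : x.1 < p.1 := by
              rcases lt_trichotomy p.1 x.1 with h | h | h
              · exact absurd hb (comp_K1 hc hxL hpL hp₀ hb₀ h)
              · exact absurd h (hc.2.1 p hpL x hxL hne)
              · exact h
            exact lord_of_right (not_mem_of_perm (partperm 0).2 (hLM p hpL))
              (not_mem_of_perm (partperm 0).2 (hLM x hxL)) (c0 x hxL p hpL hxlt)
          · exact lord_left_right (mem_of_perm (partperm 0).2 hpM)
              (not_mem_of_perm (partperm 0).2 (hLM x hxL))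
        · push_neg at hex
          obtain ⟨b, hb, hdom⟩ := cl1 x hxL σ
          refine ⟨b, hb, ?_⟩
          intro p hp hbel
          rcases comp_mem_cases hc hp with hpL | hpM
          · by_cases hbc : b ≤ c
            · have e : R b = part b ++ R' b := by simp [hR, hbc]
              rw [e]
              exact lord_of_right (not_mem_of_perm (partperm b).2 (hLM p hpL))
                (not_mem_of_perm (partperm b).2 (hLM x hxL)) (hdom p hpL hbel)
            · have e : R b = R' b ++ part b := by simp [hR, hbc]
              rw [e]
              exact lord_of_left (mem_of_perm (permR b).2 hpL) (mem_of_perm (permR b).2 hxL)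
                (hdom p hpL hbel)
          · exact absurd hbel (hex p hpM)
      · obtain ⟨t, ht, hdom⟩ := pb x hxM σ
        have hkc : c + 1 ≤ k := hck
        refine ⟨k - t, by omega, ?_⟩
        have hbig : ¬ (k - t ≤ c) := by omega
        have e : R (k - t) = R' (k - t) ++ part (k - t) := by simp [hR, hbig]
        have epb : part (k - t) = B t := by
          by_cases hkt : k - t ≤ c + 1
          · have h1 : k - t = c + 1 := by omega
            have h2 : t = k - (c + 1) := by omega
            rw [hpart]
            simp only [h1, if_pos (le_refl (c+1))]
            rw [elast, h2]
          · have e2 : part (k - t) = B (k - (k - t)) := by simp [hpart, hkt]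
            have h3 : k - (k - t) = t := by omega
            rw [e2, h3]
        rw [e, epb]
        intro p hp hbel
        rcases comp_mem_cases hc hp with hpL | hpM
        · exact lord_left_right (mem_of_perm (permR (k - t)).2 hpL)
            (not_mem_of_perm (permR (k - t)).2 (hML x hxM))
        · exact lord_of_right (not_mem_of_perm (permR (k - t)).2 (hML p hpM))
            (not_mem_of_perm (permR (k - t)).2 (hML x hxM)) (hdom p hpM hbel)
    · -- CL2
      intro x hx σ
      rcases comp_mem_cases hc hx with hxL | hxM
      · obtain ⟨b, hb, hdom⟩ := cl2 x hxL σ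
        refine ⟨b, by omega, ?_⟩
        have e : R b = part b ++ R' b := by simp [hR, hb]
        rw [e]
        intro p hp ha
        rcases comp_mem_cases hc hp with hpL | hpM
        · exact lord_of_right (not_mem_of_perm (partperm b).2 (hLM p hpL))
            (not_mem_of_perm (partperm b).2 (hLM x hxL)) (hdom p hpL ha)
        · exact lord_left_right (mem_of_perm (partperm b).2 hpM)
            (not_mem_of_perm (partperm b).2 (hLM x hxL))
      · by_cases hex : ∃ p₀ ∈ Qc, Abov σ x p₀
        · obtain ⟨p₀, hp₀, ha₀⟩ := hex
          refine ⟨c + 1, le_refl _, ?_⟩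
          have hnb : ¬ (c + 1 ≤ c) := by omega
          have e : R (c + 1) = R' (c + 1) ++ part (c + 1) := by simp [hR, hnb]
          rw [e, epartlast]
          intro p hp ha
          rcases comp_mem_cases hc hp with hpL | hpM
          · exact lord_left_right (mem_of_perm (permR (c + 1)).2 hpL)
              (not_mem_of_perm (permR (c + 1)).2 (hML x hxM))
          · have hne : p ≠ x := by rintro rfl; exact abov_irrefl _ _ ha
            have hplt : p.1 < x.1 := by
              rcases lt_trichotomy p.1 x.1 with h | h | h
              · exact h
              · exact absurd h (hc.2.2.1 p hpM x hxM hne)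
              · exact absurd ha (comp_K2 hc hxM hpM hp₀ ha₀ h)
            exact lord_of_right (not_mem_of_perm (permR (c + 1)).2 (hML p hpM))
              (not_mem_of_perm (permR (c + 1)).2 (hML x hxM)) (plast x hxM p hpM hplt)
        · push_neg at hex
          obtain ⟨t, ht, hdom⟩ := pa x hxM σ
          refine ⟨t, ht, ?_⟩
          have ept : part t = A t := by simp [hpart, ht]
          intro p hp ha
          rcases comp_mem_cases hc hp with hpL | hpM
          · exact absurd ha (hex p hpL)
          · by_cases htc : t ≤ c
            · have e : R t = part t ++ R' t := by simp [hR, htc]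
              rw [e, ept]
              exact lord_of_left (mem_of_perm (pA t).2 hpM) (mem_of_perm (pA t).2 hxM)
                (hdom p hpM ha)
            · have e : R t = R' t ++ part t := by simp [hR, htc]
              rw [e, ept]
              exact lord_of_right (not_mem_of_perm (permR t).2 (hML p hpM))
                (not_mem_of_perm (permR t).2 (hML x hxM)) (hdom p hpM ha)

end XesProof

namespace XesProof

/-- weight of a finite set w.r.t. list `ω`. -/
def wval (ω : List Pt) (A : Finset Pt) : ℕ := A.sum (fun p => 2 ^ idx ω p)

theorem sum_range_two_pow (m : ℕ) : (Finset.range m).sum (fun n => 2 ^ n) = 2 ^ m - 1 := by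
  induction m with
  | zero => simp
  | succ m ih =>
    rw [Finset.sum_range_succ, ih]
    have : 1 ≤ 2 ^ m := Nat.one_le_two_pow
    have : 2 ^ (m + 1) = 2 ^ m + 2 ^ m := by ring
    omega

theorem sum_two_pow_lt {T : Finset ℕ} {m : ℕ} (h : ∀ n ∈ T, n < m) :
    T.sum (fun n => 2 ^ n) < 2 ^ m := by
  have hsub : T ⊆ Finset.range m := fun n hn => Finset.mem_range.2 (h n hn)
  calc T.sum (fun n => 2 ^ n) ≤ (Finset.range m).sum (fun n => 2 ^ n) :=
        Finset.sum_le_sum_of_subset hsub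
    _ = 2 ^ m - 1 := sum_range_two_pow m
    _ < 2 ^ m := by have : 1 ≤ 2 ^ m := Nat.one_le_two_pow; omega

theorem wval_lt_of_below {ω : List Pt} {Pf A B : Finset Pt} (hnd : ω.Nodup)
    (hto : ω.toFinset = Pf) (hA : A ⊆ Pf) (hB : B ⊆ Pf) {x : Pt} (hxA : x ∈ A) (hxB : x ∉ B)
    (hmax : ∀ p ∈ B, p ∉ A → idx ω p ≤ idx ω x) : wval ω B < wval ω A := by
  have hmem : ∀ {q : Pt}, q ∈ Pf → q ∈ ω := fun hq => mem_of_perm hto hq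
  set Hi : Pt → Prop := fun p => idx ω x < idx ω p with hHi
  have hsplitA := Finset.sum_filter_add_sum_filter_not A Hi (fun p => 2 ^ idx ω p)
  have hsplitB := Finset.sum_filter_add_sum_filter_not B Hi (fun p => 2 ^ idx ω p)
  have h1 : (B.filter Hi).sum (fun p => 2 ^ idx ω p) ≤
      (A.filter Hi).sum (fun p => 2 ^ idx ω p) := by
    apply Finset.sum_le_sum_of_subset
    intro p hp
    rcases Finset.mem_filter.1 hp with ⟨hpB, hpHi⟩
    refine Finset.mem_filter.2 ⟨?_, hpHi⟩
    by_contra hpA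
    exact absurd (hmax p hpB hpA) (by simpa [hHi] using hpHi)
  have h2 : (B.filter (fun p => ¬ Hi p)).sum (fun p => 2 ^ idx ω p) < 2 ^ idx ω x := by
    have hinj : ∀ p ∈ B.filter (fun p => ¬ Hi p), ∀ q ∈ B.filter (fun p => ¬ Hi p),
        idx ω p = idx ω q → p = q := by
      intro p hp q hq he
      exact idx_inj hnd (hmem (hB (Finset.mem_filter.1 hp).1))
        (hmem (hB (Finset.mem_filter.1 hq).1)) he
    have himg : ((B.filter (fun p => ¬ Hi p)).image (fun p => idx ω p)).sum (fun n => 2 ^ n)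
        = (B.filter (fun p => ¬ Hi p)).sum (fun p => 2 ^ idx ω p) := Finset.sum_image hinj
    rw [← himg]
    apply sum_two_pow_lt
    intro n hn
    rcases Finset.mem_image.1 hn with ⟨p, hp, rfl⟩
    rcases Finset.mem_filter.1 hp with ⟨hpB, hpHi⟩
    have hle : idx ω p ≤ idx ω x := by simpa [hHi] using hpHi
    rcases lt_or_eq_of_le hle with h | h
    · exact h
    · exact absurd (idx_inj hnd (hmem (hB hpB)) (hmem (hA hxA)) h) (fun e => hxB (e ▸ hpB))
  have h3 : 2 ^ idx ω x ≤ (A.filter (fun p => ¬ Hi p)).sum (fun p => 2 ^ idx ω p) := by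
    apply Finset.single_le_sum (f := fun p => 2 ^ idx ω p)
    · intro q hq; positivity
    · exact Finset.mem_filter.2 ⟨hxA, by simp [hHi]⟩
  unfold wval
  rw [← hsplitA, ← hsplitB]
  set a1 := (A.filter Hi).sum (fun p => 2 ^ idx ω p)
  set a2 := (A.filter (fun p => ¬ Hi p)).sum (fun p => 2 ^ idx ω p)
  set b1 := (B.filter Hi).sum (fun p => 2 ^ idx ω p)
  set b2 := (B.filter (fun p => ¬ Hi p)).sum (fun p => 2 ^ idx ω p)
  exact Nat.add_lt_add_of_le_of_lt h1 (lt_of_lt_of_le h2 h3)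

theorem wval_compare {ω : List Pt} {Pf A B : Finset Pt} (hnd : ω.Nodup)
    (hto : ω.toFinset = Pf) (hA : A ⊆ Pf) (hB : B ⊆ Pf) (hne : A ≠ B) :
    wval ω A < wval ω B ∨ wval ω B < wval ω A := by
  have hDne : ((A \ B) ∪ (B \ A)).Nonempty := by
    by_contra hD
    rw [Finset.not_nonempty_iff_eq_empty, Finset.union_eq_empty] at hD
    exact hne (Finset.Subset.antisymm
      (fun a ha => by
        by_contra hb
        exact (Finset.eq_empty_iff_forall_notMem.1 hD.1 a) (Finset.mem_sdiff.2 ⟨ha, hb⟩))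
      (fun a ha => by
        by_contra hb
        exact (Finset.eq_empty_iff_forall_notMem.1 hD.2 a) (Finset.mem_sdiff.2 ⟨ha, hb⟩)))
  obtain ⟨x, hxD, hmax⟩ := Finset.exists_max_image _ (fun p => idx ω p) hDne
  rcases Finset.mem_union.1 hxD with hx | hx
  · rcases Finset.mem_sdiff.1 hx with ⟨hxA, hxB⟩
    refine Or.inr (wval_lt_of_below hnd hto hA hB hxA hxB ?_)
    intro q hqB hqA
    exact hmax q (Finset.mem_union_right _ (Finset.mem_sdiff.2 ⟨hqB, hqA⟩))
  · rcases Finset.mem_sdiff.1 hx with ⟨hxB, hxA⟩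
    refine Or.inl (wval_lt_of_below hnd hto hB hA hxB hxA ?_)
    intro q hqA hqB
    exact hmax q (Finset.mem_union_left _ (Finset.mem_sdiff.2 ⟨hqA, hqB⟩))

theorem wval_mono {ω : List Pt} {A B : Finset Pt} (hsub : A ⊆ B) (hne : A ≠ B) :
    wval ω A < wval ω B := by
  have : ¬ B ⊆ A := fun h => hne (Finset.Subset.antisymm hsub h)
  obtain ⟨x, hxB, hxA⟩ := Finset.not_subset.1 this
  apply Finset.sum_lt_sum_of_subset hsub hxB hxA
  · positivity
  · intro q _ _; positivity

end XesProof

namespace XesProof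

theorem sep_cases {B : Finset Pt} {x : Pt} (hx : x ∉ convexHull ℝ (B : Set Pt)) :
    B = ∅ ∨ (∃ σ : ℝ, ∀ p ∈ B, Belo σ x p) ∨ (∃ σ : ℝ, ∀ p ∈ B, Abov σ x p) ∨
      (∀ p ∈ B, p.1 < x.1) ∨ (∀ p ∈ B, x.1 < p.1) := by
  by_cases hBe : B = ∅
  · exact Or.inl hBe
  right
  have hcl : IsClosed (convexHull ℝ (B : Set Pt)) := (B.finite_toSet).isClosed_convexHull ℝ
  have hcv : Convex ℝ (convexHull ℝ (B : Set Pt)) := convex_convexHull ℝ _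
  obtain ⟨f, u, hfa, hfx⟩ := geometric_hahn_banach_closed_point hcv hcl hx
  have hfp : ∀ p ∈ B, f p < f x := by
    intro p hp
    have : (p : Pt) ∈ convexHull ℝ (B : Set Pt) := subset_convexHull ℝ _ hp
    exact lt_trans (hfa p this) hfx
  set α := f ((1 : ℝ), (0 : ℝ)) with hα
  set β := f ((0 : ℝ), (1 : ℝ)) with hβ
  have hf : ∀ p : Pt, f p = p.1 * α + p.2 * β := by
    intro p
    have hdecomp : p = p.1 • ((1 : ℝ), (0 : ℝ)) + p.2 • ((0 : ℝ), (1 : ℝ)) := by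
      ext <;> simp
    rw [hdecomp, map_add, map_smul, map_smul]
    simp [hα, hβ, smul_eq_mul]
  have key : ∀ p ∈ B, p.1 * α + p.2 * β < x.1 * α + x.2 * β := by
    intro p hp
    have := hfp p hp
    rwa [hf p, hf x] at this
  rcases lt_trichotomy β 0 with hb | hb | hb
  · -- β < 0 : Above
    right; left
    refine ⟨-α / β, ?_⟩
    intro p hp
    have h := key p hp
    unfold Abov
    rw [div_mul_eq_mul_div, div_lt_iff_of_neg hb]
    nlinarith
  · -- β = 0
    right; right
    rcases lt_trichotomy α 0 with ha | ha | ha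
    · right
      intro p hp
      have h := key p hp
      rw [hb] at h
      nlinarith
    · exfalso
      obtain ⟨p, hp⟩ := Finset.nonempty_iff_ne_empty.2 hBe
      have h := key p hp
      rw [hb, ha] at h
      simp at h
    · left
      intro p hp
      have h := key p hp
      rw [hb] at h
      nlinarith
  · -- β > 0 : Below
    left
    refine ⟨-α / β, ?_⟩
    intro p hp
    have h := key p hp
    unfold Belo
    rw [div_mul_eq_mul_div, lt_div_iff₀ hb]
    nlinarith

/-- Full domination: the `k+1` orders handle every closed set not containing `x`. -/
theorem domination {k : ℕ} {Pf : Finset Pt} (R : ℕ → List Pt)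
    (hperm : ∀ b, (R b).Nodup ∧ (R b).toFinset = Pf)
    (c0 : ∀ x ∈ Pf, ∀ p ∈ Pf, x.1 < p.1 → LOrd (R 0) p x)
    (c3 : ∀ x ∈ Pf, ∃ b ≤ k, ∀ p ∈ Pf, p.1 < x.1 → LOrd (R b) p x)
    (cl1 : ∀ x ∈ Pf, ∀ σ : ℝ, ∃ b ≤ k, ∀ p ∈ Pf, Belo σ x p → LOrd (R b) p x)
    (cl2 : ∀ x ∈ Pf, ∀ σ : ℝ, ∃ b ≤ k, ∀ p ∈ Pf, Abov σ x p → LOrd (R b) p x)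
    {x : Pt} (hx : x ∈ Pf) {B : Finset Pt} (hB : B ⊆ Pf)
    (hxc : x ∉ convexHull ℝ (B : Set Pt)) :
    ∃ b ≤ k, ∀ p ∈ B, LOrd (R b) p x := by
  rcases sep_cases hxc with h | h | h | h | h
  · exact ⟨0, Nat.zero_le _, fun p hp => absurd (h ▸ hp) (Finset.notMem_empty p)⟩
  · obtain ⟨σ, hσ⟩ := h
    obtain ⟨b, hb, hdom⟩ := cl1 x hx σ
    exact ⟨b, hb, fun p hp => hdom p (hB hp) (hσ p hp)⟩
  · obtain ⟨σ, hσ⟩ := h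
    obtain ⟨b, hb, hdom⟩ := cl2 x hx σ
    exact ⟨b, hb, fun p hp => hdom p (hB hp) (hσ p hp)⟩
  · obtain ⟨b, hb, hdom⟩ := c3 x hx
    exact ⟨b, hb, fun p hp => hdom p (hB hp) (h p hp)⟩
  · exact ⟨0, Nat.zero_le _, fun p hp => c0 x hx p (hB hp) (h p hp)⟩

/-- Upper bound: realizer of size `k+1`. -/
theorem upper_bound {k : ℕ} {Pf : Finset Pt} (R : ℕ → List Pt)
    (hperm : ∀ b, (R b).Nodup ∧ (R b).toFinset = Pf)
    (hdom : ∀ x ∈ Pf, ∀ B : Finset Pt, B ⊆ Pf → x ∉ convexHull ℝ (B : Set Pt) →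
      ∃ b ≤ k, ∀ p ∈ B, LOrd (R b) p x) :
    RHasRealizer Pf (k + 1) := by
  refine ⟨fun b A B => wval (R b.1) A.1 < wval (R b.1) B.1 ∨ A = B, ?_, ?_, ?_⟩
  · intro b
    refine { refl := ?_, trans := ?_, antisymm := ?_, total := ?_ }
    · intro A; exact Or.inr rfl
    · intro A B C hAB hBC
      rcases hAB with h1 | h1 <;> rcases hBC with h2 | h2
      · exact Or.inl (lt_trans h1 h2)
      · exact Or.inl (h2 ▸ h1)
      · exact Or.inl (h1 ▸ h2)
      · exact Or.inr (h1.trans h2)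
    · intro A B hAB hBA
      rcases hAB with h1 | h1
      · rcases hBA with h2 | h2
        · exact absurd h2 (lt_asymm h1)
        · exact h2.symm
      · exact h1
    · intro A B
      by_cases he : A = B
      · exact Or.inl (Or.inr he)
      have hne : A.1 ≠ B.1 := fun h => he (Subtype.ext h)
      rcases wval_compare (hperm b.1).1 (hperm b.1).2 A.2.1 B.2.1 hne with h | h
      · exact Or.inl (Or.inl h)
      · exact Or.inr (Or.inl h)
  · intro b A B hsub
    by_cases he : A = B
    · exact Or.inr he
    · exact Or.inl (wval_mono hsub (fun h => he (Subtype.ext h)))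
  · intro A B hall
    by_contra hnsub
    obtain ⟨x, hxA, hxB⟩ := Finset.not_subset.1 hnsub
    have hxP : x ∈ Pf := A.2.1 hxA
    have hxc : x ∉ convexHull ℝ (B.1 : Set Pt) := by
      intro hc
      exact hxB (B.2.2 x hxP hc)
    obtain ⟨b, hb, hdomb⟩ := hdom x hxP B.1 B.2.1 hxc
    have hw : wval (R b) B.1 < wval (R b) A.1 := by
      apply wval_lt_of_below (hperm b).1 (hperm b).2 A.2.1 B.2.1 hxA hxB
      intro p hp _
      exact le_of_lt (hdomb p hp)
    rcases hall ⟨b, by omega⟩ with h | h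
    · exact absurd hw (lt_asymm h)
    · rw [h] at hxA
      exact hxB hxA

end XesProof

namespace XesProof

theorem isES_nonempty {i j : ℕ} {S : Finset Pt} (h : IsES i j S) : S.Nonempty := by
  induction h with
  | base_left k p => exact ⟨p, Finset.mem_singleton_self p⟩
  | base_right k p => exact ⟨p, Finset.mem_singleton_self p⟩
  | @step i j S L M hL hM hc ihL ihM =>
    obtain ⟨q, hq⟩ := ihL
    exact ⟨q, by rw [hc.1]; exact Finset.mem_union_left _ hq⟩

theorem convex_halfpl (a1 a2 d1 d2 : ℝ) :
    Convex ℝ {q : Pt | 0 ≤ (q.2 - a2) * d1 - (q.1 - a1) * d2} := by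
  intro u hu v hv s t hs ht hst
  simp only [Set.mem_setOf_eq] at hu hv ⊢
  have h1 : (s • u + t • v).1 = s * u.1 + t * v.1 := rfl
  have h2 : (s • u + t • v).2 = s * u.2 + t * v.2 := rfl
  rw [h1, h2]
  have key : (s * u.2 + t * v.2 - a2) * d1 - (s * u.1 + t * v.1 - a1) * d2 =
      s * ((u.2 - a2) * d1 - (u.1 - a1) * d2) + t * ((v.2 - a2) * d1 - (v.1 - a1) * d2) := by
    linear_combination (a2 * d1 - a1 * d2) * hst
  rw [key]
  exact add_nonneg (mul_nonneg hs hu) (mul_nonneg ht hv)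

theorem convex_right_half (c : ℝ) : Convex ℝ {q : Pt | c ≤ q.1} := by
  intro u hu v hv s t hs ht hst
  simp only [Set.mem_setOf_eq] at hu hv ⊢
  have h1 : (s • u + t • v).1 = s * u.1 + t * v.1 := rfl
  rw [h1]
  have h2 : s * c + t * c = c := by rw [← add_mul, hst, one_mul]
  nlinarith [mul_le_mul_of_nonneg_left hu hs, mul_le_mul_of_nonneg_left hv ht]

theorem convex_left_half (c : ℝ) : Convex ℝ {q : Pt | q.1 ≤ c} := by
  intro u hu v hv s t hs ht hst
  simp only [Set.mem_setOf_eq] at hu hv ⊢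
  have h1 : (s • u + t • v).1 = s * u.1 + t * v.1 := rfl
  rw [h1]
  have h2 : s * c + t * c = c := by rw [← add_mul, hst, one_mul]
  nlinarith [mul_le_mul_of_nonneg_left hu hs, mul_le_mul_of_nonneg_left hv ht]

end XesProof


/-- For every positive integer `k` and every realization of the extended
Erdős–Szekeres point set `XES(k)`, the order dimension of the lattice of closed sets of the
realizable convex geometry on `XES(k)` equals `k + 1`: `k + 1` is the least positive
integer `t` such that the lattice admits a realizer of size `t`. -/
theorem xes_orderDim (k : ℕ) (hk : 0 < k) (P : Finset (ℝ × ℝ))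
    (hgen : GenPos P) (hxes : IsXES k P) :
    IsLeast {t : ℕ | 0 < t ∧ RHasRealizer P t} (k + 1) := by
  classical
  obtain ⟨E, Q, hE, hQ0, hcomp, hPQ⟩ := hxes
  obtain ⟨R, permR, c0, c3, cl1, cl2⟩ := XesProof.chainLem E Q hE hQ0 hcomp k (le_refl k)
  rw [← hPQ] at permR c0 c3 cl1 cl2
  have hupper : RHasRealizer P (k + 1) :=
    XesProof.upper_bound R permR
      (fun x hx B hB hxc => XesProof.domination R permR c0 c3 cl1 cl2 hx hB hxc)
  -- cup points
  have hEne : ∀ a, a ≤ k → (E a).Nonempty := fun a ha => XesProof.isES_nonempty (hE a ha)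
  have hch : ∀ a : ℕ, ∃ q : XesProof.Pt, a ≤ k → q ∈ E a := by
    intro a
    by_cases h : a ≤ k
    · exact ⟨(hEne a h).choose, fun _ => (hEne a h).choose_spec⟩
    · exact ⟨(0, 0), fun hh => absurd hh h⟩
  choose p hp using hch
  have hQsub : ∀ b, b < k → Q b ⊆ Q (b + 1) := by
    intro b hb
    rw [(hcomp b hb).1]
    exact Finset.subset_union_left
  have hQle : ∀ b c, b ≤ c → c ≤ k → Q b ⊆ Q c := by
    intro b c hbc hck
    induction c with
    | zero =>
      have : b = 0 := by omega
      subst this; exact subset_rfl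
    | succ c ih =>
      by_cases h : b = c + 1
      · subst h; exact subset_rfl
      · exact (ih (by omega) (by omega)).trans (hQsub c (by omega))
  have hEQ : ∀ a, a ≤ k → E a ⊆ Q a := by
    intro a ha
    cases a with
    | zero => rw [hQ0]
    | succ a => rw [(hcomp a (by omega)).1]; exact Finset.subset_union_right
  have hpP : ∀ a, a ≤ k → p a ∈ P := by
    intro a ha
    rw [hPQ]
    exact hQle a k ha (le_refl k) (hEQ a ha (hp a ha))
  have hpQ : ∀ a b, a ≤ b → b ≤ k → p a ∈ Q b := by
    intro a b hab hbk
    exact hQle a b hab hbk (hEQ a (by omega) (hp a (by omega)))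
  have hxinc : ∀ a b, a < b → b ≤ k → (p a).1 < (p b).1 := by
    intro a b hab hbk
    obtain ⟨b', rfl⟩ : ∃ b', b = b' + 1 := ⟨b - 1, by omega⟩
    exact XesProof.comp_lt (hcomp b' (by omega)) (p a) (hpQ a b' (by omega) (by omega))
      (p (b' + 1)) (hp _ hbk)
  have hslope : ∀ a b c, a < b → b < c → c ≤ k →
      ((p b).2 - (p a).2) * ((p c).1 - (p b).1) <
        ((p c).2 - (p b).2) * ((p b).1 - (p a).1) := by
    intro a b c hab hbc hck
    obtain ⟨c', rfl⟩ : ∃ c', c = c' + 1 := ⟨c - 1, by omega⟩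
    have hs := ((hcomp c' (by omega)).2.2.2.2 (p b) (hpQ b c' (by omega) (by omega))
      (p (c' + 1)) (hp _ hck)).1
    exact hs (p a) (hpQ a c' (by omega) (by omega)) (p b) (hpQ b c' (by omega) (by omega))
      (hxinc a b hab (by omega))
  have hpne : ∀ i j, i ≤ k → j ≤ k → i ≠ j → p i ≠ p j := by
    intro i j hi hj hne
    rcases lt_or_gt_of_ne hne with h | h
    · exact fun he => absurd (hxinc i j h hj) (by rw [he]; exact lt_irrefl _)
    · exact fun he => absurd (hxinc j i h hi) (by rw [he]; exact lt_irrefl _)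
  set C : Finset XesProof.Pt := (Finset.range (k + 1)).image p with hC
  have hmemC : ∀ i, i ≤ k → p i ∈ C := by
    intro i hi
    exact Finset.mem_image.2 ⟨i, Finset.mem_range.2 (by omega), rfl⟩
  have hmemE : ∀ jj, jj ≤ k → ∀ q ∈ C.erase (p jj), ∃ i, i ≤ k ∧ i ≠ jj ∧ q = p i := by
    intro jj hjj q hq
    rcases Finset.mem_erase.1 hq with ⟨hne, hqC⟩
    rcases Finset.mem_image.1 hqC with ⟨i, hi, rfl⟩
    have hik : i ≤ k := by have := Finset.mem_range.1 hi; omega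
    exact ⟨i, hik, fun h => hne (h ▸ rfl), rfl⟩
  -- the cup separation
  have hcup : ∀ jj, jj ≤ k → p jj ∉ convexHull ℝ ((C.erase (p jj) : Finset XesProof.Pt) : Set XesProof.Pt) := by
    intro jj hjj hmem
    rcases Nat.eq_zero_or_pos jj with h0 | hpos
    · -- jj = 0 : everything else is strictly to the right
      subst h0
      have hsub : ((C.erase (p 0) : Finset XesProof.Pt) : Set XesProof.Pt) ⊆
          {q : XesProof.Pt | (p 1).1 ≤ q.1} := by
        intro q hq
        obtain ⟨i, hik, hne, rfl⟩ := hmemE 0 (by omega) q (Finset.mem_coe.1 hq)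
        have hi1 : 1 ≤ i := by omega
        have : (p 1).1 ≤ (p i).1 := by
          rcases eq_or_lt_of_le hi1 with h | h
          · subst h; exact le_refl _
          · exact le_of_lt (hxinc 1 i h hik)
        exact this
      have := convexHull_min hsub (XesProof.convex_right_half _) hmem
      simp only [Set.mem_setOf_eq] at this
      exact absurd this (not_le.2 (hxinc 0 1 (by omega) (by omega)))
    · rcases eq_or_lt_of_le hjj with hk0 | hjlt
      · -- jj = k
        subst hk0
        have hsub : ((C.erase (p jj) : Finset XesProof.Pt) : Set XesProof.Pt) ⊆
            {q : XesProof.Pt | q.1 ≤ (p (jj - 1)).1} := by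
          intro q hq
          obtain ⟨i, hik, hne, rfl⟩ := hmemE jj (le_refl _) q (Finset.mem_coe.1 hq)
          have hi1 : i ≤ jj - 1 := by omega
          have : (p i).1 ≤ (p (jj - 1)).1 := by
            rcases eq_or_lt_of_le hi1 with h | h
            · subst h; exact le_refl _
            · exact le_of_lt (hxinc i (jj - 1) h (by omega))
          exact this
        have := convexHull_min hsub (XesProof.convex_left_half _) hmem
        simp only [Set.mem_setOf_eq] at this
        exact absurd this (not_le.2 (hxinc (jj - 1) jj (by omega) (by omega)))
      · -- 0 < jj < k
        set A := p (jj - 1) with hA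
        set Bp := p (jj + 1) with hBp
        have hsub : ((C.erase (p jj) : Finset XesProof.Pt) : Set XesProof.Pt) ⊆
            {q : XesProof.Pt | 0 ≤ (q.2 - A.2) * (Bp.1 - A.1) - (q.1 - A.1) * (Bp.2 - A.2)} := by
          intro q hq
          obtain ⟨i, hik, hne, rfl⟩ := hmemE jj (by omega) q (Finset.mem_coe.1 hq)
          simp only [Set.mem_setOf_eq]
          rcases lt_trichotomy i (jj - 1) with hi | hi | hi
          · have hs := hslope i (jj - 1) (jj + 1) hi (by omega) (by omega)
            rw [← hA, ← hBp] at hs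
            nlinarith [hs]
          · subst hi; rw [← hA]; ring_nf; exact le_refl _
          · rcases lt_trichotomy i (jj + 1) with hi' | hi' | hi'
            · omega
            · subst hi'; rw [← hBp]; ring_nf; exact le_refl _
            · have hs := hslope (jj - 1) (jj + 1) i (by omega) hi' hik
              rw [← hA, ← hBp] at hs
              nlinarith [hs]
        have hin := convexHull_min hsub (XesProof.convex_halfpl A.1 A.2 (Bp.1 - A.1) (Bp.2 - A.2)) hmem
        simp only [Set.mem_setOf_eq] at hin
        have hs := hslope (jj - 1) jj (jj + 1) (by omega) (by omega) (by omega)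
        rw [← hA, ← hBp] at hs
        nlinarith [hs, hin]
  -- closed sets for the standard example
  have hAcl : ∀ i, i ≤ k → RClosed P {p i} := by
    intro i hi
    refine ⟨Finset.singleton_subset_iff.2 (hpP i hi), ?_⟩
    intro x hx hconv
    rw [Finset.coe_singleton, convexHull_singleton, Set.mem_singleton_iff] at hconv
    exact hconv ▸ Finset.mem_singleton_self _
  set Bs : ℕ → Finset XesProof.Pt := fun i =>
    P.filter (fun q => q ∈ convexHull ℝ ((C.erase (p i) : Finset XesProof.Pt) : Set XesProof.Pt))
    with hBs
  have hBcl : ∀ i, RClosed P (Bs i) := by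
    intro i
    refine ⟨Finset.filter_subset _ _, ?_⟩
    intro x hx hconv
    have hsub : ((Bs i : Finset XesProof.Pt) : Set XesProof.Pt) ⊆
        convexHull ℝ ((C.erase (p i) : Finset XesProof.Pt) : Set XesProof.Pt) := by
      intro q hq
      exact (Finset.mem_filter.1 (Finset.mem_coe.1 hq)).2
    have := convexHull_min hsub (convex_convexHull ℝ _) hconv
    exact Finset.mem_filter.2 ⟨hx, this⟩
  have hpiBj : ∀ i j, i ≤ k → j ≤ k → i ≠ j → p i ∈ Bs j := by
    intro i j hi hj hne
    refine Finset.mem_filter.2 ⟨hpP i hi, ?_⟩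
    apply subset_convexHull
    exact Finset.mem_coe.2 (Finset.mem_erase.2 ⟨hpne i j hi hj hne, hmemC i hi⟩)
  have hpiBi : ∀ i, i ≤ k → p i ∉ Bs i := by
    intro i hi hmem
    exact hcup i hi (Finset.mem_filter.1 hmem).2
  -- conclusion
  constructor
  · exact ⟨by omega, hupper⟩
  · rintro t ⟨htpos, r, hlin, hmono, hint⟩
    by_contra hlt
    push_neg at hlt
    have hlt' : t < k + 1 := hlt
    set av : Fin (k + 1) → {A : Finset (ℝ × ℝ) // RClosed P A} :=
      fun i => ⟨{p i.1}, hAcl i.1 (by omega)⟩ with hav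
    set bv : Fin (k + 1) → {A : Finset (ℝ × ℝ) // RClosed P A} :=
      fun i => ⟨Bs i.1, hBcl i.1⟩ with hbv
    have hmex : ∀ i : Fin (k + 1), ∃ b : Fin t, ¬ r b (av i) (bv i) := by
      intro i
      by_contra h
      push_neg at h
      have hsub := hint (av i) (bv i) h
      have : p i.1 ∈ Bs i.1 := hsub (Finset.mem_singleton_self _)
      exact hpiBi i.1 (by omega) this
    choose m hm using hmex
    have hcard : Fintype.card (Fin t) < Fintype.card (Fin (k + 1)) := by
      simpa using hlt'
    obtain ⟨i, j, hij, hmeq⟩ := Fintype.exists_ne_map_eq_of_card_lt m hcard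
    set b := m i with hb
    have hri : ¬ r b (av i) (bv i) := hm i
    have hrj : ¬ r b (av j) (bv j) := hmeq ▸ hm j
    have htot := (hlin b).toTotal.total
    have htrans := (hlin b).toIsPartialOrder.toIsPreorder.toIsTrans.trans
    have hanti := (hlin b).toIsPartialOrder.toAntisymm.antisymm
    have h1 : r b (bv i) (av i) := by
      rcases htot (av i) (bv i) with h | h
      · exact absurd h hri
      · exact h
    have h2 : r b (bv j) (av j) := by
      rcases htot (av j) (bv j) with h | h
      · exact absurd h hrj
      · exact h
    have hvalne : (i : ℕ) ≠ (j : ℕ) := fun h => hij (Fin.ext h)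
    have h3 : r b (av i) (bv j) := by
      apply hmono
      simp only [hav, hbv]
      exact Finset.singleton_subset_iff.2 (hpiBj i.1 j.1 (by omega) (by omega) hvalne)
    have h4 : r b (av j) (bv i) := by
      apply hmono
      simp only [hav, hbv]
      exact Finset.singleton_subset_iff.2 (hpiBj j.1 i.1 (by omega) (by omega) (Ne.symm hvalne))
    have h5 : r b (bv i) (bv j) := htrans _ _ _ h1 h3
    have h6 : r b (bv j) (bv i) := htrans _ _ _ h2 h4
    have heq : bv i = bv j := hanti _ _ h5 h6
    have : p i.1 ∈ Bs i.1 := by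
      have hmemj : p i.1 ∈ Bs j.1 := hpiBj i.1 j.1 (by omega) (by omega) hvalne
      have : (bv i).1 = (bv j).1 := congrArg Subtype.val heq
      simp only [hbv] at this
      rw [this]
      exact hmemj
    exact hpiBi i.1 (by omega) this
end
end
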